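/- Let Γ' = Γ ∪ {∀x φ[∃y◇ψ]} be a clean finite set of formulas, each a subformula of the ABBABE fragment, where ∃y◇ψ is a component of φ. If ⋀Γ ∧ ∀x φ[∃y◇ψ] is satisfiable in an increasing domain model, then for l = 2^{|Γ'|} exactly, the formula ⋀Γ ∧ ∃y1∃y1'∃y2∃y2'…∃yl∃yl' ∀x φ[ȳ◇ψ] is satisfiable in an increasing domain model, with y1,y1',…,yl,yl' fresh variables and φ[ȳ◇ψ] obtained from φ by replacing the component ∃y◇ψ with ⋁_{i≤l}( ◇ψ[yi/y] ∨ ◇ψ[yi'/y] ). -/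

import Mathlib

set_option maxHeartbeats 1000000

/-! ## Syntax of first-order modal logic (FOML)

Predicate symbols and variables are represented by natural numbers; an atom
`atom p args` applies the predicate symbol `p` to the list of variables `args`
(the arity of `p` in this occurrence is the length of `args`). -/
inductive Formula : Type where
  | atom (p : ℕ) (args : List ℕ)
  | neg  (φ : Formula)
  | and  (φ ψ : Formula)
  | or   (φ ψ : Formula)
  | box  (φ : Formula)
  | dia  (φ : Formula)
  | ex   (x : ℕ) (φ : Formula)
  | all  (x : ℕ) (φ : Formula)
deriving DecidableEq

namespace Formula

def imp (φ ψ : Formula) : Formula := .or φ.neg ψ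
def biimp (φ ψ : Formula) : Formula := .and (imp φ ψ) (imp ψ φ)
/-- a fixed tautology `⊤` -/
def top : Formula := .or (.atom 0 []) (.neg (.atom 0 []))
/-- a fixed contradiction `⊥` -/
def bot : Formula := .and (.atom 0 []) (.neg (.atom 0 []))

end Formula

def bigAnd (l : List Formula) : Formula := l.foldr Formula.and Formula.top
def bigOr  (l : List Formula) : Formula := l.foldr Formula.or Formula.bot

/-! ## Semantics: Kripke structures with world-relative domains -/

structure Model where
  W : Type
  D : Type
  R : W → W → Prop
  dom : W → Set D
  ρ : W → ℕ → Set (List D)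

/-- `M` is an increasing domain model: nonempty countable set of worlds, nonempty
countable domain, nonempty local domains that increase along the accessibility
relation, and interpretations of predicates at a world take values in the local
domain of that world. -/
def Model.Increasing (M : Model) : Prop :=
  Nonempty M.W ∧ Nonempty M.D ∧ Countable M.W ∧ Countable M.D ∧
    (∀ w, (M.dom w).Nonempty) ∧
    (∀ w v, M.R w v → M.dom w ⊆ M.dom v) ∧
    (∀ w p l, l ∈ M.ρ w p → ∀ d ∈ l, d ∈ M.dom w)

def Model.sat (M : Model) : M.W → (ℕ → M.D) → Formula → Prop
  | w, σ, .atom p args => args.map σ ∈ M.ρ w p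
  | w, σ, .neg φ => ¬ M.sat w σ φ
  | w, σ, .and φ ψ => M.sat w σ φ ∧ M.sat w σ ψ
  | w, σ, .or φ ψ => M.sat w σ φ ∨ M.sat w σ ψ
  | w, σ, .box φ => ∀ v, M.R w v → M.sat v σ φ
  | w, σ, .dia φ => ∃ v, M.R w v ∧ M.sat v σ φ
  | w, σ, .ex x φ => ∃ d ∈ M.dom w, M.sat w (Function.update σ x d) φ
  | w, σ, .all x φ => ∀ d ∈ M.dom w, M.sat w (Function.update σ x d) φ

/-- the assignment `σ` is relevant at the world `w` -/
def Model.relevant (M : Model) (w : M.W) (σ : ℕ → M.D) : Prop := ∀ x, σ x ∈ M.dom w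

/-- satisfiability over increasing domain models -/
def Satisfiable (φ : Formula) : Prop :=
  ∃ (M : Model), M.Increasing ∧ ∃ (w : M.W) (σ : ℕ → M.D), M.relevant w σ ∧ M.sat w σ φ
/-! ## Free and bound variables, cleanliness, substitution, α-equivalence -/

namespace Formula

def fv : Formula → Finset ℕ
  | .atom _ args => args.toFinset
  | .neg φ => φ.fv
  | .and φ ψ => φ.fv ∪ ψ.fv
  | .or φ ψ => φ.fv ∪ ψ.fv
  | .box φ => φ.fv
  | .dia φ => φ.fv
  | .ex x φ => φ.fv.erase x
  | .all x φ => φ.fv.erase x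

def bv : Formula → Finset ℕ
  | .atom _ _ => ∅
  | .neg φ => φ.bv
  | .and φ ψ => φ.bv ∪ ψ.bv
  | .or φ ψ => φ.bv ∪ ψ.bv
  | .box φ => φ.bv
  | .dia φ => φ.bv
  | .ex x φ => insert x φ.bv
  | .all x φ => insert x φ.bv

/-- every use of a quantifier in the formula quantifies a distinct variable -/
def uniqueBinders : Formula → Prop
  | .atom _ _ => True
  | .neg φ => φ.uniqueBinders
  | .and φ ψ => φ.uniqueBinders ∧ ψ.uniqueBinders ∧ Disjoint φ.bv ψ.bv
  | .or φ ψ => φ.uniqueBinders ∧ ψ.uniqueBinders ∧ Disjoint φ.bv ψ.bv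
  | .box φ => φ.uniqueBinders
  | .dia φ => φ.uniqueBinders
  | .ex x φ => φ.uniqueBinders ∧ x ∉ φ.bv
  | .all x φ => φ.uniqueBinders ∧ x ∉ φ.bv

/-- a formula is clean if no variable occurs both bound and free in it and
every use of a quantifier quantifies a distinct variable -/
def Clean (φ : Formula) : Prop := φ.uniqueBinders ∧ Disjoint φ.fv φ.bv

/-- `φ.subst y z` is `φ[z/y]`: replace every free occurrence of `y` by `z` -/
def subst (y z : ℕ) : Formula → Formula
  | .atom p args => .atom p (args.map fun v => if v = y then z else v)
  | .neg φ => .neg (φ.subst y z)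
  | .and φ ψ => .and (φ.subst y z) (ψ.subst y z)
  | .or φ ψ => .or (φ.subst y z) (ψ.subst y z)
  | .box φ => .box (φ.subst y z)
  | .dia φ => .dia (φ.subst y z)
  | .ex x φ => if x = y then .ex x φ else .ex x (φ.subst y z)
  | .all x φ => if x = y then .all x φ else .all x (φ.subst y z)

def isLiteralB : Formula → Bool
  | .atom _ _ => true
  | .neg (.atom _ _) => true
  | _ => false

/-- a module is a literal, a `□`-formula, or a `◇`-formula -/
def isModuleB : Formula → Bool
  | .box _ => true
  | .dia _ => true
  | φ => φ.isLiteralB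

/-- the component set `C(φ)` of a formula -/
def comps : Formula → Finset Formula
  | .and φ ψ => φ.comps ∪ ψ.comps
  | .or φ ψ => φ.comps ∪ ψ.comps
  | .ex x φ => insert (.ex x φ) φ.comps
  | .all x φ => insert (.all x φ) φ.comps
  | φ => {φ}

end Formula

/-- α-equivalence (renaming of bound variables) -/
inductive AlphaEq : Formula → Formula → Prop where
  | atom (p : ℕ) (args : List ℕ) : AlphaEq (.atom p args) (.atom p args)
  | neg {φ φ'} : AlphaEq φ φ' → AlphaEq (.neg φ) (.neg φ')
  | and {φ φ' ψ ψ'} : AlphaEq φ φ' → AlphaEq ψ ψ' → AlphaEq (.and φ ψ) (.and φ' ψ')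
  | or {φ φ' ψ ψ'} : AlphaEq φ φ' → AlphaEq ψ ψ' → AlphaEq (.or φ ψ) (.or φ' ψ')
  | box {φ φ'} : AlphaEq φ φ' → AlphaEq (.box φ) (.box φ')
  | dia {φ φ'} : AlphaEq φ φ' → AlphaEq (.dia φ) (.dia φ')
  | ex {x x' : ℕ} {φ φ'}
      (h : ∀ z, z ∉ φ.bv ∪ φ'.bv → AlphaEq (φ.subst x z) (φ'.subst x' z)) :
      AlphaEq (.ex x φ) (.ex x' φ')
  | all {x x' : ℕ} {φ φ'}
      (h : ∀ z, z ∉ φ.bv ∪ φ'.bv → AlphaEq (φ.subst x z) (φ'.subst x' z)) :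
      AlphaEq (.all x φ) (.all x' φ')

/-- a finite set of formulas is clean if the conjunction of its members is clean -/
def CleanSet (Γ : Finset Formula) : Prop :=
  (∀ φ ∈ Γ, φ.uniqueBinders) ∧
    Disjoint (Γ.sup Formula.fv) (Γ.sup Formula.bv) ∧
    (∀ φ ∈ Γ, ∀ ψ ∈ Γ, φ ≠ ψ → Disjoint φ.bv ψ.bv)

/-- `Γ` is Existential-safe: every component of every formula of `Γ` is a module
or universally quantified -/
def ExSafe (Γ : Finset Formula) : Prop :=
  ∀ φ ∈ Γ, ∀ β ∈ φ.comps, β.isModuleB = true ∨ ∃ (x : ℕ) (γ : Formula), β = .all x γ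
/-- The `ABBABE` fragment (in negation normal form): literals, `∧`, `∨`, `□α`,
`◇α`, and the bundles `∀x□α`, `□∀xα`, `□∃xα` together with their duals
`∃x◇α`, `◇∃xα`, `◇∀xα`. -/
inductive ABBABE : Formula → Prop where
  | atom (p : ℕ) (args : List ℕ) : ABBABE (.atom p args)
  | natom (p : ℕ) (args : List ℕ) : ABBABE (.neg (.atom p args))
  | and {φ ψ : Formula} : ABBABE φ → ABBABE ψ → ABBABE (.and φ ψ)
  | or {φ ψ : Formula} : ABBABE φ → ABBABE ψ → ABBABE (.or φ ψ)
  | box {φ : Formula} : ABBABE φ → ABBABE (.box φ)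
  | dia {φ : Formula} : ABBABE φ → ABBABE (.dia φ)
  | allBox {x : ℕ} {φ : Formula} : ABBABE φ → ABBABE (.all x (.box φ))
  | exDia {x : ℕ} {φ : Formula} : ABBABE φ → ABBABE (.ex x (.dia φ))
  | boxAll {x : ℕ} {φ : Formula} : ABBABE φ → ABBABE (.box (.all x φ))
  | diaEx {x : ℕ} {φ : Formula} : ABBABE φ → ABBABE (.dia (.ex x φ))
  | boxEx {x : ℕ} {φ : Formula} : ABBABE φ → ABBABE (.box (.ex x φ))
  | diaAll {x : ℕ} {φ : Formula} : ABBABE φ → ABBABE (.dia (.all x φ))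

/-- `Subf φ ψ` : `φ` is a subformula of `ψ` -/
inductive Subf : Formula → Formula → Prop where
  | refl (φ : Formula) : Subf φ φ
  | neg {φ ψ} : Subf φ ψ → Subf φ (.neg ψ)
  | andL {φ ψ χ} : Subf φ ψ → Subf φ (.and ψ χ)
  | andR {φ ψ χ} : Subf φ χ → Subf φ (.and ψ χ)
  | orL {φ ψ χ} : Subf φ ψ → Subf φ (.or ψ χ)
  | orR {φ ψ χ} : Subf φ χ → Subf φ (.or ψ χ)
  | box {φ ψ} : Subf φ ψ → Subf φ (.box ψ)
  | dia {φ ψ} : Subf φ ψ → Subf φ (.dia ψ)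
  | ex {x : ℕ} {φ ψ} : Subf φ ψ → Subf φ (.ex x ψ)
  | all {x : ℕ} {φ ψ} : Subf φ ψ → Subf φ (.all x ψ)

/-- `φ` is a subformula of the `ABBABE` fragment: it is a subformula of some
formula of the fragment -/
def IsSubABBABE (φ : Formula) : Prop := ∃ ψ, ABBABE ψ ∧ Subf φ ψ
/-- a finite set of formulas is (simultaneously) satisfiable in an increasing
domain model with a relevant assignment -/
def SatSet (Γ : Finset Formula) : Prop :=
  ∃ (M : Model), M.Increasing ∧ ∃ (w : M.W) (σ : ℕ → M.D),
    M.relevant w σ ∧ ∀ φ ∈ Γ, M.sat w σ φ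

/-- the size (number of symbols) of a formula -/
def Formula.size : Formula → ℕ
  | .atom _ args => 1 + args.length
  | .neg φ => φ.size + 1
  | .and φ ψ => φ.size + ψ.size + 1
  | .or φ ψ => φ.size + ψ.size + 1
  | .box φ => φ.size + 1
  | .dia φ => φ.size + 1
  | .ex _ φ => φ.size + 2
  | .all _ φ => φ.size + 2

/-- `replComp t r φ` is `φ[r/t]`: the result of replacing the component `t` of
`φ` by `r` (descending only through boolean connectives and quantifiers) -/
def replComp (t r : Formula) (φ : Formula) : Formula :=
  if φ = t then r
  else
    match φ with
    | .and φ₁ φ₂ => .and (replComp t r φ₁) (replComp t r φ₂)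
    | .or φ₁ φ₂ => .or (replComp t r φ₁) (replComp t r φ₂)
    | .ex x φ₁ => .ex x (replComp t r φ₁)
    | .all x φ₁ => .all x (replComp t r φ₁)
    | φ' => φ'

/-- the existential prefix `∃y1∃y1'∃y2∃y2'…∃yl∃yl'` given by a list of pairs -/
def exChain (ys : List (ℕ × ℕ)) (φ : Formula) : Formula :=
  ys.foldr (fun p acc => .ex p.1 (.ex p.2 acc)) φ

/-- the disjunction `⋁_{i≤l} ( ◇ψ[yi/y] ∨ ◇ψ[yi'/y] )` -/
def mkWitDisj (y : ℕ) (ψ : Formula) (ys : List (ℕ × ℕ)) : Formula :=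
  bigOr (ys.map fun p => .or (.dia (ψ.subst y p.1)) (.dia (ψ.subst y p.2)))

namespace BW

open Formula

/-- subformula set -/
def subfs : Formula → Finset Formula
  | .atom p args => {.atom p args}
  | .neg χ => insert (.neg χ) (subfs χ)
  | .and χ₁ χ₂ => insert (.and χ₁ χ₂) (subfs χ₁ ∪ subfs χ₂)
  | .or χ₁ χ₂ => insert (.or χ₁ χ₂) (subfs χ₁ ∪ subfs χ₂)
  | .box χ => insert (.box χ) (subfs χ)
  | .dia χ => insert (.dia χ) (subfs χ)
  | .ex v χ => insert (.ex v χ) (subfs χ)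
  | .all v χ => insert (.all v χ) (subfs χ)

lemma mem_subfs_self (χ : Formula) : χ ∈ subfs χ := by
  cases χ <;> simp [subfs]

lemma subfs_card_le_size (χ : Formula) : (subfs χ).card ≤ χ.size := by
  induction χ with
  | atom p args =>
      show ({Formula.atom p args} : Finset Formula).card ≤ 1 + args.length
      simp only [Finset.card_singleton]; omega
  | neg χ ih =>
      calc (subfs (.neg χ)).card ≤ (subfs χ).card + 1 := Finset.card_insert_le _ _
        _ ≤ _ := by simp only [Formula.size]; omega
  | and χ₁ χ₂ ih₁ ih₂ =>
      calc (subfs (.and χ₁ χ₂)).card ≤ (subfs χ₁ ∪ subfs χ₂).card + 1 := Finset.card_insert_le _ _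
        _ ≤ (subfs χ₁).card + (subfs χ₂).card + 1 := by
            have := Finset.card_union_le (subfs χ₁) (subfs χ₂); omega
        _ ≤ _ := by simp only [Formula.size]; omega
  | or χ₁ χ₂ ih₁ ih₂ =>
      calc (subfs (.or χ₁ χ₂)).card ≤ (subfs χ₁ ∪ subfs χ₂).card + 1 := Finset.card_insert_le _ _
        _ ≤ (subfs χ₁).card + (subfs χ₂).card + 1 := by
            have := Finset.card_union_le (subfs χ₁) (subfs χ₂); omega
        _ ≤ _ := by simp only [Formula.size]; omega
  | box χ ih =>
      calc (subfs (.box χ)).card ≤ (subfs χ).card + 1 := Finset.card_insert_le _ _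
        _ ≤ _ := by simp only [Formula.size]; omega
  | dia χ ih =>
      calc (subfs (.dia χ)).card ≤ (subfs χ).card + 1 := Finset.card_insert_le _ _
        _ ≤ _ := by simp only [Formula.size]; omega
  | ex v χ ih =>
      calc (subfs (.ex v χ)).card ≤ (subfs χ).card + 1 := Finset.card_insert_le _ _
        _ ≤ _ := by simp only [Formula.size]; omega
  | all v χ ih =>
      calc (subfs (.all v χ)).card ≤ (subfs χ).card + 1 := Finset.card_insert_le _ _
        _ ≤ _ := by simp only [Formula.size]; omega

lemma subfs_fv_bv {δ χ : Formula} (h : δ ∈ subfs χ) :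
    δ.fv ⊆ χ.fv ∪ χ.bv ∧ δ.bv ⊆ χ.bv := by
  induction χ with
  | atom p args =>
      simp [subfs] at h; subst h; simp
  | neg χ ih =>
      rw [subfs, Finset.mem_insert] at h
      rcases h with h | h
      · subst h; simp
      · obtain ⟨h1, h2⟩ := ih h
        exact ⟨h1.trans (by simp [Formula.fv, Formula.bv]), h2.trans (by simp [Formula.bv])⟩
  | and χ₁ χ₂ ih₁ ih₂ =>
      rw [subfs, Finset.mem_insert, Finset.mem_union] at h
      rcases h with h | h | h
      · subst h; simp
      · obtain ⟨h1, h2⟩ := ih₁ h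
        constructor
        · refine h1.trans ?_
          intro v hv; simp [Formula.fv, Formula.bv] at hv ⊢; tauto
        · refine h2.trans ?_; intro v hv; simp [Formula.bv]; tauto
      · obtain ⟨h1, h2⟩ := ih₂ h
        constructor
        · refine h1.trans ?_
          intro v hv; simp [Formula.fv, Formula.bv] at hv ⊢; tauto
        · refine h2.trans ?_; intro v hv; simp [Formula.bv]; tauto
  | or χ₁ χ₂ ih₁ ih₂ =>
      rw [subfs, Finset.mem_insert, Finset.mem_union] at h
      rcases h with h | h | h
      · subst h; simp
      · obtain ⟨h1, h2⟩ := ih₁ h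
        constructor
        · refine h1.trans ?_
          intro v hv; simp [Formula.fv, Formula.bv] at hv ⊢; tauto
        · refine h2.trans ?_; intro v hv; simp [Formula.bv]; tauto
      · obtain ⟨h1, h2⟩ := ih₂ h
        constructor
        · refine h1.trans ?_
          intro v hv; simp [Formula.fv, Formula.bv] at hv ⊢; tauto
        · refine h2.trans ?_; intro v hv; simp [Formula.bv]; tauto
  | box χ ih =>
      rw [subfs, Finset.mem_insert] at h
      rcases h with h | h
      · subst h; simp
      · obtain ⟨h1, h2⟩ := ih h
        exact ⟨h1.trans (by simp [Formula.fv, Formula.bv]), h2.trans (by simp [Formula.bv])⟩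
  | dia χ ih =>
      rw [subfs, Finset.mem_insert] at h
      rcases h with h | h
      · subst h; simp
      · obtain ⟨h1, h2⟩ := ih h
        exact ⟨h1.trans (by simp [Formula.fv, Formula.bv]), h2.trans (by simp [Formula.bv])⟩
  | ex v χ ih =>
      rw [subfs, Finset.mem_insert] at h
      rcases h with h | h
      · subst h; simp
      · obtain ⟨h1, h2⟩ := ih h
        constructor
        · refine h1.trans ?_
          intro u hu; simp only [Formula.fv, Formula.bv, Finset.mem_union, Finset.mem_erase,
            Finset.mem_insert] at hu ⊢
          by_cases huv : u = v <;> tauto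
        · refine h2.trans ?_; intro u hu; simp [Formula.bv]; tauto
  | all v χ ih =>
      rw [subfs, Finset.mem_insert] at h
      rcases h with h | h
      · subst h; simp
      · obtain ⟨h1, h2⟩ := ih h
        constructor
        · refine h1.trans ?_
          intro u hu; simp only [Formula.fv, Formula.bv, Finset.mem_union, Finset.mem_erase,
            Finset.mem_insert] at hu ⊢
          by_cases huv : u = v <;> tauto
        · refine h2.trans ?_; intro u hu; simp [Formula.bv]; tauto

lemma subfs_subset_and_left (χ₁ χ₂ : Formula) : subfs χ₁ ⊆ subfs (.and χ₁ χ₂) := by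
  intro a ha
  show a ∈ insert (Formula.and χ₁ χ₂) (subfs χ₁ ∪ subfs χ₂)
  exact Finset.mem_insert_of_mem (Finset.mem_union_left _ ha)

lemma subfs_subset_and_right (χ₁ χ₂ : Formula) : subfs χ₂ ⊆ subfs (.and χ₁ χ₂) := by
  intro a ha
  show a ∈ insert (Formula.and χ₁ χ₂) (subfs χ₁ ∪ subfs χ₂)
  exact Finset.mem_insert_of_mem (Finset.mem_union_right _ ha)

lemma subfs_subset_or_left (χ₁ χ₂ : Formula) : subfs χ₁ ⊆ subfs (.or χ₁ χ₂) := by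
  intro a ha
  show a ∈ insert (Formula.or χ₁ χ₂) (subfs χ₁ ∪ subfs χ₂)
  exact Finset.mem_insert_of_mem (Finset.mem_union_left _ ha)

lemma subfs_subset_or_right (χ₁ χ₂ : Formula) : subfs χ₂ ⊆ subfs (.or χ₁ χ₂) := by
  intro a ha
  show a ∈ insert (Formula.or χ₁ χ₂) (subfs χ₁ ∪ subfs χ₂)
  exact Finset.mem_insert_of_mem (Finset.mem_union_right _ ha)

/-- satisfaction depends only on free variables -/
lemma sat_congr (M : Model) {χ : Formula} :
    ∀ {w : M.W} {σ σ' : ℕ → M.D}, (∀ v ∈ χ.fv, σ v = σ' v) →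
      (M.sat w σ χ ↔ M.sat w σ' χ) := by
  induction χ with
  | atom p args =>
      intro w σ σ' h
      have : args.map σ = args.map σ' := by
        apply List.map_congr_left
        intro a ha; exact h a (by simp [Formula.fv, List.mem_toFinset, ha])
      simp [Model.sat, this]
  | neg χ ih => intro w σ σ' h; simp only [Model.sat]; rw [ih h]
  | and χ₁ χ₂ ih₁ ih₂ =>
      intro w σ σ' h; simp only [Model.sat]
      rw [ih₁ (fun v hv => h v (by simp [Formula.fv]; exact Or.inl hv)),
        ih₂ (fun v hv => h v (by simp [Formula.fv]; exact Or.inr hv))]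
  | or χ₁ χ₂ ih₁ ih₂ =>
      intro w σ σ' h; simp only [Model.sat]
      rw [ih₁ (fun v hv => h v (by simp [Formula.fv]; exact Or.inl hv)),
        ih₂ (fun v hv => h v (by simp [Formula.fv]; exact Or.inr hv))]
  | box χ ih =>
      intro w σ σ' h; simp only [Model.sat]
      exact forall₂_congr fun v _ => ih h
  | dia χ ih =>
      intro w σ σ' h; simp only [Model.sat]
      exact exists_congr fun v => and_congr_right fun _ => ih h
  | ex u χ ih =>
      intro w σ σ' h; simp only [Model.sat]
      refine exists_congr fun d => and_congr_right fun _ => ih ?_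
      intro v hv
      rcases eq_or_ne v u with rfl | hne
      · simp [Function.update]
      · simp only [Function.update_of_ne hne]
        exact h v (by simp [Formula.fv, Finset.mem_erase]; exact ⟨hne, hv⟩)
  | all u χ ih =>
      intro w σ σ' h; simp only [Model.sat]
      refine forall₂_congr fun d _ => ih ?_
      intro v hv
      rcases eq_or_ne v u with rfl | hne
      · simp [Function.update]
      · simp only [Function.update_of_ne hne]
        exact h v (by simp [Formula.fv, Finset.mem_erase]; exact ⟨hne, hv⟩)

/-- substitution lemma -/
lemma sat_subst (M : Model) {y z : ℕ} {χ : Formula} (hz : z ∉ χ.bv) :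
    ∀ {w : M.W} {σ : ℕ → M.D},
      (M.sat w σ (χ.subst y z) ↔ M.sat w (Function.update σ y (σ z)) χ) := by
  induction χ with
  | atom p args =>
      intro w σ
      have : (args.map fun v => if v = y then z else v).map σ
          = args.map (Function.update σ y (σ z)) := by
        rw [List.map_map]
        apply List.map_congr_left
        intro a _
        by_cases hay : a = y <;> simp [hay, Function.update]
      simp only [Model.sat, Formula.subst, this]
  | neg χ ih =>
      intro w σ; simp only [Model.sat, Formula.subst]
      rw [ih (by simpa [Formula.bv] using hz)]
  | and χ₁ χ₂ ih₁ ih₂ =>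
      intro w σ; simp only [Model.sat, Formula.subst]
      rw [ih₁ (fun hmem => hz (by simp [Formula.bv]; exact Or.inl hmem)),
        ih₂ (fun hmem => hz (by simp [Formula.bv]; exact Or.inr hmem))]
  | or χ₁ χ₂ ih₁ ih₂ =>
      intro w σ; simp only [Model.sat, Formula.subst]
      rw [ih₁ (fun hmem => hz (by simp [Formula.bv]; exact Or.inl hmem)),
        ih₂ (fun hmem => hz (by simp [Formula.bv]; exact Or.inr hmem))]
  | box χ ih =>
      intro w σ; simp only [Model.sat, Formula.subst]
      exact forall₂_congr fun v _ => ih (by simpa [Formula.bv] using hz)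
  | dia χ ih =>
      intro w σ; simp only [Model.sat, Formula.subst]
      exact exists_congr fun v => and_congr_right fun _ => ih (by simpa [Formula.bv] using hz)
  | ex u χ ih =>
      intro w σ
      have hzu : z ≠ u := by
        intro h; exact hz (by simp only [Formula.bv, Finset.mem_insert]; exact Or.inl h)
      have hzχ : z ∉ χ.bv := fun hmem => hz (by simp [Formula.bv]; exact Or.inr hmem)
      by_cases huy : u = y
      · subst huy
        simp only [Formula.subst, if_pos rfl, Model.sat]
        refine exists_congr fun d => and_congr_right fun _ => ?_
        rw [Function.update_idem]
      · simp only [Formula.subst, if_neg huy, Model.sat]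
        refine exists_congr fun d => and_congr_right fun _ => ?_
        rw [ih hzχ]
        have : Function.update (Function.update σ u d) y ((Function.update σ u d) z)
            = Function.update (Function.update σ y (σ z)) u d := by
          rw [Function.update_of_ne hzu]
          rw [Function.update_comm (fun h => huy h.symm)]
        rw [this]
  | all u χ ih =>
      intro w σ
      have hzu : z ≠ u := by
        intro h; exact hz (by simp only [Formula.bv, Finset.mem_insert]; exact Or.inl h)
      have hzχ : z ∉ χ.bv := fun hmem => hz (by simp [Formula.bv]; exact Or.inr hmem)
      by_cases huy : u = y
      · subst huy
        simp only [Formula.subst, if_pos rfl, Model.sat]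
        refine forall₂_congr fun d _ => ?_
        rw [Function.update_idem]
      · simp only [Formula.subst, if_neg huy, Model.sat]
        refine forall₂_congr fun d _ => ?_
        rw [ih hzχ]
        have : Function.update (Function.update σ u d) y ((Function.update σ u d) z)
            = Function.update (Function.update σ y (σ z)) u d := by
          rw [Function.update_of_ne hzu]
          rw [Function.update_comm (fun h => huy h.symm)]
        rw [this]

end BW
namespace BW

open Formula

@[simp] lemma comps_atom (p args) : (Formula.atom p args).comps = {Formula.atom p args} := rfl
@[simp] lemma comps_neg (χ) : (Formula.neg χ).comps = {Formula.neg χ} := rfl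
@[simp] lemma comps_box (χ) : (Formula.box χ).comps = {Formula.box χ} := rfl
@[simp] lemma comps_dia (χ) : (Formula.dia χ).comps = {Formula.dia χ} := rfl
@[simp] lemma comps_and (χ₁ χ₂) : (Formula.and χ₁ χ₂).comps = χ₁.comps ∪ χ₂.comps := rfl
@[simp] lemma comps_or (χ₁ χ₂) : (Formula.or χ₁ χ₂).comps = χ₁.comps ∪ χ₂.comps := rfl
@[simp] lemma comps_ex (v χ) : (Formula.ex v χ).comps = insert (Formula.ex v χ) χ.comps := rfl
@[simp] lemma comps_all (v χ) : (Formula.all v χ).comps = insert (Formula.all v χ) χ.comps := rfl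

lemma comps_subset_subfs (χ : Formula) : χ.comps ⊆ subfs χ := by
  induction χ with
  | atom p args => simp [subfs]
  | neg χ ih => simp [subfs]
  | and χ₁ χ₂ ih₁ ih₂ =>
      rw [comps_and]
      refine Finset.union_subset ?_ ?_
      · exact ih₁.trans (subfs_subset_and_left _ _)
      · exact ih₂.trans (subfs_subset_and_right _ _)
  | or χ₁ χ₂ ih₁ ih₂ =>
      rw [comps_or]
      refine Finset.union_subset ?_ ?_
      · exact ih₁.trans (subfs_subset_or_left _ _)
      · exact ih₂.trans (subfs_subset_or_right _ _)
  | box χ ih => simp [subfs]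
  | dia χ ih => simp [subfs]
  | ex v χ ih =>
      rw [comps_ex]
      refine Finset.insert_subset (mem_subfs_self _) ?_
      refine ih.trans ?_
      intro a ha
      show a ∈ insert (Formula.ex v χ) (subfs χ)
      exact Finset.mem_insert_of_mem ha
  | all v χ ih =>
      rw [comps_all]
      refine Finset.insert_subset (mem_subfs_self _) ?_
      refine ih.trans ?_
      intro a ha
      show a ∈ insert (Formula.all v χ) (subfs χ)
      exact Finset.mem_insert_of_mem ha

/-- in an ABBABE formula, an existential-diamond component has its free
variables among those of the formula -/
lemma compfv {χ : Formula} (h : ABBABE χ) {y : ℕ} {ψ : Formula}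
    (hc : Formula.ex y (.dia ψ) ∈ χ.comps) : (Formula.ex y (.dia ψ)).fv ⊆ χ.fv := by
  induction h with
  | atom p args => simp at hc
  | natom p args => simp at hc
  | and h₁ h₂ ih₁ ih₂ =>
      rw [comps_and, Finset.mem_union] at hc
      rcases hc with hc | hc
      · exact (ih₁ hc).trans (by simp [Formula.fv])
      · exact (ih₂ hc).trans (by simp [Formula.fv])
  | or h₁ h₂ ih₁ ih₂ =>
      rw [comps_or, Finset.mem_union] at hc
      rcases hc with hc | hc
      · exact (ih₁ hc).trans (by simp [Formula.fv])
      · exact (ih₂ hc).trans (by simp [Formula.fv])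
  | box h ih => simp at hc
  | dia h ih => simp at hc
  | allBox h ih =>
      rw [comps_all, Finset.mem_insert] at hc
      rcases hc with hc | hc
      · cases hc
      · simp at hc
  | exDia h ih =>
      rw [comps_ex, Finset.mem_insert] at hc
      rcases hc with hc | hc
      · rw [hc]
      · simp at hc
  | boxAll h ih => simp at hc
  | diaEx h ih => simp at hc
  | boxEx h ih => simp at hc
  | diaAll h ih => simp at hc

/-- classification of subformulas of the ABBABE fragment -/
lemma subclass : ∀ {θ : Formula}, ABBABE θ → ∀ {γ : Formula}, Subf γ θ →
    ABBABE γ ∨ (∃ z χ, γ = .all z χ ∧ ABBABE χ) ∨ (∃ z χ, γ = .ex z χ ∧ ABBABE χ) := by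
  intro θ hθ
  induction hθ with
  | atom p args =>
      intro γ hs; cases hs; exact Or.inl (ABBABE.atom p args)
  | natom p args =>
      intro γ hs
      cases hs with
      | refl => exact Or.inl (ABBABE.natom p args)
      | neg hs' => cases hs'; exact Or.inl (ABBABE.atom p args)
  | and h₁ h₂ ih₁ ih₂ =>
      intro γ hs
      cases hs with
      | refl => exact Or.inl (ABBABE.and h₁ h₂)
      | andL hs' => exact ih₁ hs'
      | andR hs' => exact ih₂ hs'
  | or h₁ h₂ ih₁ ih₂ =>
      intro γ hs
      cases hs with
      | refl => exact Or.inl (ABBABE.or h₁ h₂)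
      | orL hs' => exact ih₁ hs'
      | orR hs' => exact ih₂ hs'
  | box h ih =>
      intro γ hs
      cases hs with
      | refl => exact Or.inl (ABBABE.box h)
      | box hs' => exact ih hs'
  | dia h ih =>
      intro γ hs
      cases hs with
      | refl => exact Or.inl (ABBABE.dia h)
      | dia hs' => exact ih hs'
  | @allBox v φ h ih =>
      intro γ hs
      cases hs with
      | refl => exact Or.inl (ABBABE.allBox h)
      | all hs' =>
          cases hs' with
          | refl => exact Or.inl (ABBABE.box h)
          | box hs'' => exact ih hs''
  | @exDia v φ h ih =>
      intro γ hs
      cases hs with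
      | refl => exact Or.inl (ABBABE.exDia h)
      | ex hs' =>
          cases hs' with
          | refl => exact Or.inl (ABBABE.dia h)
          | dia hs'' => exact ih hs''
  | @boxAll v φ h ih =>
      intro γ hs
      cases hs with
      | refl => exact Or.inl (ABBABE.boxAll h)
      | box hs' =>
          cases hs' with
          | refl => exact Or.inr (Or.inl ⟨v, φ, rfl, h⟩)
          | all hs'' => exact ih hs''
  | @diaEx v φ h ih =>
      intro γ hs
      cases hs with
      | refl => exact Or.inl (ABBABE.diaEx h)
      | dia hs' =>
          cases hs' with
          | refl => exact Or.inr (Or.inr ⟨v, φ, rfl, h⟩)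
          | ex hs'' => exact ih hs''
  | @boxEx v φ h ih =>
      intro γ hs
      cases hs with
      | refl => exact Or.inl (ABBABE.boxEx h)
      | box hs' =>
          cases hs' with
          | refl => exact Or.inr (Or.inr ⟨v, φ, rfl, h⟩)
          | ex hs'' => exact ih hs''
  | @diaAll v φ h ih =>
      intro γ hs
      cases hs with
      | refl => exact Or.inl (ABBABE.diaAll h)
      | dia hs' =>
          cases hs' with
          | refl => exact Or.inr (Or.inl ⟨v, φ, rfl, h⟩)
          | all hs'' => exact ih hs''

lemma sat_bigOr_of_mem (M : Model) (w : M.W) (σ : ℕ → M.D) {α : Formula} :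
    ∀ {L : List Formula}, α ∈ L → M.sat w σ α → M.sat w σ (bigOr L) := by
  intro L
  induction L with
  | nil => intro h; cases h
  | cons β L ih =>
      intro hmem hsat
      rcases List.mem_cons.mp hmem with rfl | hmem
      · exact Or.inl hsat
      · exact Or.inr (ih hmem hsat)

lemma sat_exChain (M : Model) (w : M.W) (vf : ℕ → M.D) (χ : Formula) :
    ∀ (l : List (ℕ × ℕ)) (τ : ℕ → M.D),
      (∀ p ∈ l, vf p.1 ∈ M.dom w ∧ vf p.2 ∈ M.dom w) →
      M.sat w (l.foldl (fun t p =>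
        Function.update (Function.update t p.1 (vf p.1)) p.2 (vf p.2)) τ) χ →
      M.sat w τ (exChain l χ) := by
  intro l
  induction l with
  | nil => intro τ _ h; exact h
  | cons p l ih =>
      intro τ hdom h
      refine ⟨vf p.1, (hdom p (by simp)).1, vf p.2, (hdom p (by simp)).2, ?_⟩
      exact ih _ (fun q hq => hdom q (by simp [hq])) h

lemma foldl_upd_not_mem (M : Model) (vf : ℕ → M.D) {v : ℕ} :
    ∀ {l : List (ℕ × ℕ)} (τ : ℕ → M.D), v ∉ l.map Prod.fst → v ∉ l.map Prod.snd →
      (l.foldl (fun t p =>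
        Function.update (Function.update t p.1 (vf p.1)) p.2 (vf p.2)) τ) v = τ v := by
  intro l
  induction l with
  | nil => intro τ _ _; rfl
  | cons p l ih =>
      intro τ h1 h2
      simp only [List.map_cons, List.mem_cons] at h1 h2
      rw [List.foldl_cons, ih _ (fun h => h1 (Or.inr h)) (fun h => h2 (Or.inr h))]
      rw [Function.update_of_ne (fun h => h2 (Or.inl h)),
        Function.update_of_ne (fun h => h1 (Or.inl h))]

lemma foldl_upd_mem (M : Model) (vf : ℕ → M.D) {v : ℕ} :
    ∀ {l : List (ℕ × ℕ)} (τ : ℕ → M.D), (v ∈ l.map Prod.fst ∨ v ∈ l.map Prod.snd) →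
      (l.foldl (fun t p =>
        Function.update (Function.update t p.1 (vf p.1)) p.2 (vf p.2)) τ) v = vf v := by
  intro l
  induction l with
  | nil => intro τ h; simp at h
  | cons p l ih =>
      intro τ h
      rw [List.foldl_cons]
      by_cases hmem : v ∈ l.map Prod.fst ∨ v ∈ l.map Prod.snd
      · exact ih _ hmem
      · push_neg at hmem
        rw [foldl_upd_not_mem M vf _ hmem.1 hmem.2]
        simp only [List.map_cons, List.mem_cons] at h
        have hv : v = p.1 ∨ v = p.2 := by tauto
        rcases hv with rfl | rfl
        · by_cases h12 : p.1 = p.2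
          · rw [h12]; simp [Function.update]
          · rw [Function.update_of_ne h12]
            simp [Function.update]
        · simp [Function.update]

lemma nodup_indexOf_get {α : Type*} [DecidableEq α] {l : List α} (h : l.Nodup)
    {i : ℕ} (hi : i < l.length) : l.idxOf (l.get ⟨i, hi⟩) = i := by
  have := h.idxOf_getElem i hi
  simpa using this

lemma getD_indexOf {α : Type*} [DecidableEq α] {l : List α} {a : α} (h : a ∈ l) (d : α) :
    l.getD (l.idxOf a) d = a := by
  have hlt : l.idxOf a < l.length := List.idxOf_lt_length_iff.mpr h
  rw [List.getD_eq_getElem l d hlt]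
  exact List.getElem_idxOf hlt

end BW
namespace BW

open Formula Classical

structure Ctx where
  M : Model
  w : M.W
  σ : ℕ → M.D
  x : ℕ
  y : ℕ
  φ : Formula
  ψ : Formula
  Γ' : Finset Formula
  ys : List (ℕ × ℕ)
  hsat : ∀ γ ∈ Γ', M.sat w σ γ
  hrelσ : ∀ v, σ v ∈ M.dom w
  hWne : Nonempty M.W
  hDne : Nonempty M.D
  hWcnt : Countable M.W
  hDcnt : Countable M.D
  hdomne : ∀ u, (M.dom u).Nonempty
  hmono : ∀ u v, M.R u v → M.dom u ⊆ M.dom v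
  hρ : ∀ u p l, l ∈ M.ρ u p → ∀ d ∈ l, d ∈ M.dom u
  hφmem : Formula.all x φ ∈ Γ'
  hABB : ABBABE φ
  hfresh : ∀ v ∈ ys.map Prod.fst ++ ys.map Prod.snd, ∀ γ ∈ Γ', v ∉ γ.fv ∪ γ.bv
  hnodup : (ys.map Prod.fst ++ ys.map Prod.snd).Nodup
  hlen : ys.length = 2 ^ (Γ'.sum Formula.size)
  hzx : ∀ v ∈ Γ'.sup Formula.bv, v ∈ (Formula.ex y (Formula.dia ψ)).fv → v = x
  hxy : x ≠ y
  hbvψ : ψ.bv ⊆ (Formula.all x φ).bv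
  hfvt : (Formula.ex y (Formula.dia ψ)).fv ⊆ φ.fv

namespace Ctx

variable (C : Ctx)

def tF : Formula := .ex C.y (.dia C.ψ)
def rF : Formula := mkWitDisj C.y C.ψ C.ys
def fsts : List ℕ := C.ys.map Prod.fst
def snds : List ℕ := C.ys.map Prod.snd

noncomputable def e0 : C.M.D := (C.hdomne C.w).choose

lemma e0_mem : C.e0 ∈ C.M.dom C.w := (C.hdomne C.w).choose_spec

/-- the witness requirement of the bundle `∃y ◇ψ` at `x := d` -/
def witP (d : C.M.D) : Prop :=
  ∃ e, e ∈ C.M.dom C.w ∧ ∃ v, C.M.R C.w v ∧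
    C.M.sat v (Function.update (Function.update C.σ C.x d) C.y e) C.ψ

lemma witP_iff (d : C.M.D) :
    C.M.sat C.w (Function.update C.σ C.x d) C.tF ↔ C.witP d := by
  simp only [tF, Model.sat, witP]

noncomputable def E (d : C.M.D) : C.M.D :=
  if h : C.witP d then h.choose else C.e0

noncomputable def V (d : C.M.D) : C.M.W :=
  if h : C.witP d then h.choose_spec.2.choose else Classical.choice C.hWne

lemma E_mem (d : C.M.D) : C.E d ∈ C.M.dom C.w := by
  unfold E
  split
  · next h => exact h.choose_spec.1
  · exact C.e0_mem

lemma wit_spec {d : C.M.D} (h : C.witP d) :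
    C.M.R C.w (C.V d) ∧
      C.M.sat (C.V d) (Function.update (Function.update C.σ C.x d) C.y (C.E d)) C.ψ := by
  unfold V E
  rw [dif_pos h, dif_pos h]
  exact ⟨h.choose_spec.2.choose_spec.1, h.choose_spec.2.choose_spec.2⟩

/-- pairs of (bound variable, subformula) relevant for the type of an element -/
noncomputable def Pset : Finset (ℕ × Formula) :=
  C.Γ'.biUnion fun γ =>
    match γ with
    | .all z χ => (subfs χ).image fun δ => (z, δ)
    | _ => (∅ : Finset (ℕ × Formula))

open Classical in
/-- the type of an element -/
noncomputable def Tt (a : C.M.D) : Finset (ℕ × Formula) :=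
  C.Pset.filter fun p => C.M.sat C.w (Function.update C.σ p.1 a) p.2

lemma mem_Tt {a : C.M.D} {p : ℕ × Formula} :
    p ∈ C.Tt a ↔ p ∈ C.Pset ∧ C.M.sat C.w (Function.update C.σ p.1 a) p.2 := by
  simp [Tt]

lemma mem_Pset_of_all {z : ℕ} {χ δ : Formula} (hγ : Formula.all z χ ∈ C.Γ')
    (hδ : δ ∈ subfs χ) : (z, δ) ∈ C.Pset := by
  refine Finset.mem_biUnion.mpr ⟨Formula.all z χ, hγ, ?_⟩
  show (z, δ) ∈ (subfs χ).image fun δ => (z, δ)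
  exact Finset.mem_image.mpr ⟨δ, hδ, rfl⟩

noncomputable def pwList : List (Finset (ℕ × Formula)) := C.Pset.powerset.toList

noncomputable def tyIdx (n : ℕ) : Finset (ℕ × Formula) := C.pwList.getD n ∅

def realized (Tn : Finset (ℕ × Formula)) : Prop := ∃ a, a ∈ C.M.dom C.w ∧ C.Tt a = Tn

noncomputable def aRep (Tn : Finset (ℕ × Formula)) : C.M.D :=
  if h : C.realized Tn then h.choose else C.e0

lemma aRep_mem (Tn : Finset (ℕ × Formula)) : C.aRep Tn ∈ C.M.dom C.w := by
  unfold aRep; split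
  · next h => exact h.choose_spec.1
  · exact C.e0_mem

lemma aRep_type {Tn : Finset (ℕ × Formula)} (h : C.realized Tn) :
    C.Tt (C.aRep Tn) = Tn := by
  unfold aRep; rw [dif_pos h]; exact h.choose_spec.2

lemma aRep_unreal {Tn : Finset (ℕ × Formula)} (h : ¬ C.realized Tn) :
    C.aRep Tn = C.e0 := by
  unfold aRep; rw [dif_neg h]

/-- the new domain -/
abbrev Dn : Type := C.M.D ⊕ (ℕ × Bool)

noncomputable def cMain : C.Dn → C.M.D :=
  Sum.elim id fun s => C.aRep (C.tyIdx s.1)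

noncomputable def cCopy (d : C.M.D) (b : Bool) : C.Dn → C.M.D :=
  Sum.elim id fun s =>
    if C.tyIdx s.1 = C.Tt (C.E d) ∧ s.2 = b then C.E d
    else if C.tyIdx s.1 = C.Tt d ∧ d ∈ C.M.dom C.w then d
    else C.aRep (C.tyIdx s.1)

def Kp (k : C.Dn → C.M.D) : Prop := k = C.cMain ∨ ∃ d b, k = C.cCopy d b

lemma Kp_cMain : C.Kp C.cMain := Or.inl rfl
lemma Kp_cCopy (d : C.M.D) (b : Bool) : C.Kp (C.cCopy d b) := Or.inr ⟨d, b, rfl⟩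

lemma k_inl {k : C.Dn → C.M.D} (hk : C.Kp k) (a : C.M.D) : k (Sum.inl a) = a := by
  rcases hk with rfl | ⟨d, b, rfl⟩ <;> rfl

lemma cCopy_inr_mem (d : C.M.D) (b : Bool) (s : ℕ × Bool) :
    C.cCopy d b (Sum.inr s) ∈ C.M.dom C.w := by
  show (if C.tyIdx s.1 = C.Tt (C.E d) ∧ s.2 = b then C.E d
    else if C.tyIdx s.1 = C.Tt d ∧ d ∈ C.M.dom C.w then d
    else C.aRep (C.tyIdx s.1)) ∈ C.M.dom C.w
  split
  · exact C.E_mem d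
  · split
    · next h => exact h.2
    · exact C.aRep_mem _

lemma k_inr_mem {k : C.Dn → C.M.D} (hk : C.Kp k) (s : ℕ × Bool) :
    k (Sum.inr s) ∈ C.M.dom C.w := by
  rcases hk with rfl | ⟨d, b, rfl⟩
  · exact C.aRep_mem _
  · exact C.cCopy_inr_mem d b s

lemma kdom {dd : C.Dn} (h : C.cMain dd ∈ C.M.dom C.w) {k : C.Dn → C.M.D}
    (hk : C.Kp k) : k dd ∈ C.M.dom C.w := by
  cases dd with
  | inl a => rw [C.k_inl hk]; rw [C.k_inl C.Kp_cMain] at h; exact h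
  | inr s => exact C.k_inr_mem hk s

lemma tcoll_real {n : ℕ} {c : Bool} (hr : C.realized (C.tyIdx n)) {k : C.Dn → C.M.D}
    (hk : C.Kp k) : C.Tt (k (Sum.inr (n, c))) = C.tyIdx n := by
  rcases hk with rfl | ⟨d, b, rfl⟩
  · exact C.aRep_type hr
  · show C.Tt (if C.tyIdx n = C.Tt (C.E d) ∧ c = b then C.E d
      else if C.tyIdx n = C.Tt d ∧ d ∈ C.M.dom C.w then d
      else C.aRep (C.tyIdx n)) = C.tyIdx n
    split
    · next h => exact h.1.symm
    · split
      · next h => exact h.1.symm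
      · exact C.aRep_type hr

lemma tcoll_unreal {n : ℕ} {c : Bool} (hr : ¬ C.realized (C.tyIdx n)) {k : C.Dn → C.M.D}
    (hk : C.Kp k) : k (Sum.inr (n, c)) = C.e0 := by
  rcases hk with rfl | ⟨d, b, rfl⟩
  · exact C.aRep_unreal hr
  · show (if C.tyIdx n = C.Tt (C.E d) ∧ c = b then C.E d
      else if C.tyIdx n = C.Tt d ∧ d ∈ C.M.dom C.w then d
      else C.aRep (C.tyIdx n)) = C.e0
    split
    · next h => exact absurd ⟨C.E d, C.E_mem d, h.1.symm⟩ hr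
    · split
      · next h => exact absurd ⟨d, h.2, h.1.symm⟩ hr
      · exact C.aRep_unreal hr

/-- the new set of worlds: a root, a main copy of `M`, and for every `(d, b)` a
renamed copy of `M` -/
abbrev Wn : Type := Option (C.M.W ⊕ (C.M.D × Bool × C.M.W))

def βw : C.Wn → C.M.W
  | none => C.w
  | some (.inl u) => u
  | some (.inr (_, _, u)) => u

noncomputable def κ : C.Wn → C.Dn → C.M.D
  | some (.inr (d, b, _)) => C.cCopy d b
  | _ => C.cMain

def Rn : C.Wn → C.Wn → Prop
  | none, some (.inl v) => C.M.R C.w v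
  | none, some (.inr (_, _, v)) => C.M.R C.w v
  | some (.inl u), some (.inl v) => C.M.R u v
  | some (.inr (d, b, u)), some (.inr (d', b', v)) => d = d' ∧ b = b' ∧ C.M.R u v
  | _, _ => False

@[reducible] noncomputable def Mn : Model where
  W := C.Wn
  D := C.Dn
  R := C.Rn
  dom := fun u => {dd | C.κ u dd ∈ C.M.dom (C.βw u)}
  ρ := fun u p => {l | l.map (C.κ u) ∈ C.M.ρ (C.βw u) p}

lemma κ_Kp (u : C.Wn) : C.Kp (C.κ u) := by
  match u with
  | none => exact C.Kp_cMain
  | some (.inl _) => exact C.Kp_cMain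
  | some (.inr (d, b, _)) => exact C.Kp_cCopy d b

noncomputable def τ₀ : ℕ → C.Dn := fun v =>
  if v ∈ C.fsts then Sum.inr (C.fsts.idxOf v, false)
  else if v ∈ C.snds then Sum.inr (C.snds.idxOf v, true)
  else Sum.inl (C.σ v)

lemma τ₀_rel (v : ℕ) : C.cMain (C.τ₀ v) ∈ C.M.dom C.w := by
  unfold τ₀
  split
  · exact C.aRep_mem _
  · split
    · exact C.aRep_mem _
    · exact C.hrelσ v

lemma τ₀_nonfresh {v : ℕ} (h1 : v ∉ C.fsts) (h2 : v ∉ C.snds) :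
    C.τ₀ v = Sum.inl (C.σ v) := by
  unfold τ₀; rw [if_neg h1, if_neg h2]

lemma fsts_nodup : C.fsts.Nodup := (List.nodup_append'.mp C.hnodup).1
lemma snds_nodup : C.snds.Nodup := (List.nodup_append'.mp C.hnodup).2.1
lemma fs_disj : ∀ a ∈ C.fsts, a ∉ C.snds := fun a ha hb => (List.nodup_append'.mp C.hnodup).2.2 ha hb

lemma fresh_not {v : ℕ} (hv : v ∈ C.fsts ∨ v ∈ C.snds) {γ : Formula} (hγ : γ ∈ C.Γ') :
    v ∉ γ.fv ∧ v ∉ γ.bv := by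
  have := C.hfresh v (by
    rcases hv with h | h
    · exact List.mem_append.mpr (Or.inl h)
    · exact List.mem_append.mpr (Or.inr h)) γ hγ
  constructor
  · intro h; exact this (Finset.mem_union_left _ h)
  · intro h; exact this (Finset.mem_union_right _ h)

lemma τ₀_get (i : ℕ) (hi : i < C.ys.length) :
    C.τ₀ (C.ys.get ⟨i, hi⟩).1 = Sum.inr (i, false) ∧
      C.τ₀ (C.ys.get ⟨i, hi⟩).2 = Sum.inr (i, true) := by
  have hif : i < C.fsts.length := by simpa [fsts] using hi
  have his : i < C.snds.length := by simpa [snds] using hi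
  have h1 : (C.ys.get ⟨i, hi⟩).1 = C.fsts.get ⟨i, hif⟩ := by simp [fsts]
  have h2 : (C.ys.get ⟨i, hi⟩).2 = C.snds.get ⟨i, his⟩ := by simp [snds]
  constructor
  · rw [h1]
    have hmem : C.fsts.get ⟨i, hif⟩ ∈ C.fsts := List.get_mem _ _
    unfold τ₀
    rw [if_pos hmem, nodup_indexOf_get C.fsts_nodup]
  · rw [h2]
    have hmem : C.snds.get ⟨i, his⟩ ∈ C.snds := List.get_mem _ _
    have hnf : C.snds.get ⟨i, his⟩ ∉ C.fsts := by
      intro hcon; exact C.fs_disj _ hcon hmem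
    unfold τ₀
    rw [if_neg hnf, if_pos hmem, nodup_indexOf_get C.snds_nodup]

lemma Pset_card_le : C.Pset.card ≤ C.Γ'.sum Formula.size := by
  refine le_trans Finset.card_biUnion_le ?_
  refine Finset.sum_le_sum ?_
  intro γ _
  match γ with
  | .all z χ =>
      show ((subfs χ).image fun δ => (z, δ)).card ≤ (Formula.all z χ).size
      calc ((subfs χ).image fun δ => (z, δ)).card ≤ (subfs χ).card := Finset.card_image_le
        _ ≤ χ.size := subfs_card_le_size χ
        _ ≤ (Formula.all z χ).size := by simp only [Formula.size]; omega
  | .atom p args => simp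
  | .neg χ => simp
  | .and χ₁ χ₂ => simp
  | .or χ₁ χ₂ => simp
  | .box χ => simp
  | .dia χ => simp
  | .ex z χ => simp

lemma pwList_len_le : C.pwList.length ≤ C.ys.length := by
  rw [C.hlen]
  show (C.Pset.powerset.toList).length ≤ _
  rw [Finset.length_toList, Finset.card_powerset]
  exact Nat.pow_le_pow_right (by omega) C.Pset_card_le

lemma Tt_mem_pwList (a : C.M.D) : C.Tt a ∈ C.pwList := by
  show C.Tt a ∈ C.Pset.powerset.toList
  rw [Finset.mem_toList, Finset.mem_powerset]
  exact Finset.filter_subset _ _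

lemma tyIdx_indexOf (a : C.M.D) : C.tyIdx (C.pwList.idxOf (C.Tt a)) = C.Tt a :=
  getD_indexOf (C.Tt_mem_pwList a) ∅

end Ctx
end BW
namespace BW

-- replComp unfolding lemmas
lemma replComp_eq_of_eq {t r χ : Formula} (h : χ = t) : replComp t r χ = r := by
  rw [replComp.eq_def, if_pos h]

lemma replComp_atom {t r : Formula} {p args} (h : Formula.atom p args ≠ t) :
    replComp t r (.atom p args) = .atom p args := by
  rw [replComp.eq_def, if_neg h]

lemma replComp_neg {t r χ : Formula} (h : Formula.neg χ ≠ t) :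
    replComp t r (.neg χ) = .neg χ := by
  rw [replComp.eq_def, if_neg h]

lemma replComp_box {t r χ : Formula} (h : Formula.box χ ≠ t) :
    replComp t r (.box χ) = .box χ := by
  rw [replComp.eq_def, if_neg h]

lemma replComp_dia {t r χ : Formula} (h : Formula.dia χ ≠ t) :
    replComp t r (.dia χ) = .dia χ := by
  rw [replComp.eq_def, if_neg h]

lemma replComp_and {t r χ₁ χ₂ : Formula} (h : Formula.and χ₁ χ₂ ≠ t) :
    replComp t r (.and χ₁ χ₂) = .and (replComp t r χ₁) (replComp t r χ₂) := by
  rw [replComp.eq_def, if_neg h]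

lemma replComp_or {t r χ₁ χ₂ : Formula} (h : Formula.or χ₁ χ₂ ≠ t) :
    replComp t r (.or χ₁ χ₂) = .or (replComp t r χ₁) (replComp t r χ₂) := by
  rw [replComp.eq_def, if_neg h]

lemma replComp_ex {t r χ : Formula} {v : ℕ} (h : Formula.ex v χ ≠ t) :
    replComp t r (.ex v χ) = .ex v (replComp t r χ) := by
  rw [replComp.eq_def, if_neg h]

lemma replComp_all {t r χ : Formula} {v : ℕ} (h : Formula.all v χ ≠ t) :
    replComp t r (.all v χ) = .all v (replComp t r χ) := by
  rw [replComp.eq_def, if_neg h]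

namespace Ctx

variable (C : Ctx)

lemma mem_dom_iff (u : C.Wn) (dd : C.Dn) :
    dd ∈ C.Mn.dom u ↔ C.κ u dd ∈ C.M.dom (C.βw u) := Iff.rfl

/-- transfer between the non-root worlds of the new model and the old model -/
lemma deep (χ : Formula) :
    ∀ (u : C.Wn), u ≠ none → ∀ (τ : ℕ → C.Dn),
      (C.Mn.sat u τ χ ↔ C.M.sat (C.βw u) ((C.κ u) ∘ τ) χ) := by
  induction χ with
  | atom p args =>
      intro u hu τ
      show (args.map τ ∈ C.Mn.ρ u p) ↔ _
      show (args.map τ).map (C.κ u) ∈ C.M.ρ (C.βw u) p ↔ _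
      rw [List.map_map]
      exact Iff.rfl
  | neg χ ih =>
      intro u hu τ
      exact not_congr (ih u hu τ)
  | and χ₁ χ₂ ih₁ ih₂ =>
      intro u hu τ
      exact and_congr (ih₁ u hu τ) (ih₂ u hu τ)
  | or χ₁ χ₂ ih₁ ih₂ =>
      intro u hu τ
      exact or_congr (ih₁ u hu τ) (ih₂ u hu τ)
  | box χ ih =>
      intro u hu τ
      match u with
      | none => exact absurd rfl hu
      | some (.inl u₀) =>
          constructor
          · intro h v hv
            have := h (some (.inl v)) hv
            exact (ih (some (.inl v)) (Option.some_ne_none _) τ).mp this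
          · intro h v' hv'
            match v' with
            | none => exact absurd hv' (by intro h; exact h)
            | some (.inl v) =>
                exact (ih (some (.inl v)) (Option.some_ne_none _) τ).mpr (h v hv')
            | some (.inr (d, b, v)) => exact absurd hv' (by intro h; exact h)
      | some (.inr (d, b, u₀)) =>
          constructor
          · intro h v hv
            have := h (some (.inr (d, b, v))) ⟨rfl, rfl, hv⟩
            exact (ih (some (.inr (d, b, v))) (Option.some_ne_none _) τ).mp this
          · intro h v' hv'
            match v' with
            | none => exact absurd hv' (by intro h; exact h)
            | some (.inl v) => exact absurd hv' (by intro h; exact h)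
            | some (.inr (d', b', v)) =>
                obtain ⟨hd, hb, hR⟩ := hv'
                subst hd; subst hb
                exact (ih (some (.inr (d, b, v))) (Option.some_ne_none _) τ).mpr (h v hR)
  | dia χ ih =>
      intro u hu τ
      match u with
      | none => exact absurd rfl hu
      | some (.inl u₀) =>
          constructor
          · intro h
            obtain ⟨v', hv', hsat⟩ := h
            match v' with
            | none => exact absurd hv' (by intro h; exact h)
            | some (.inl v) =>
                exact ⟨v, hv', (ih (some (.inl v)) (Option.some_ne_none _) τ).mp hsat⟩
            | some (.inr _) => exact absurd hv' (by intro h; exact h)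
          · intro ⟨v, hv, hsat⟩
            exact ⟨some (.inl v), hv, (ih (some (.inl v)) (Option.some_ne_none _) τ).mpr hsat⟩
      | some (.inr (d, b, u₀)) =>
          constructor
          · intro h
            obtain ⟨v', hv', hsat⟩ := h
            match v' with
            | none => exact absurd hv' (by intro h; exact h)
            | some (.inl v) => exact absurd hv' (by intro h; exact h)
            | some (.inr (d', b', v)) =>
                obtain ⟨hd, hb, hR⟩ := hv'
                subst hd; subst hb
                exact ⟨v, hR, (ih (some (.inr (d, b, v))) (Option.some_ne_none _) τ).mp hsat⟩
          · intro ⟨v, hv, hsat⟩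
            exact ⟨some (.inr (d, b, v)), ⟨rfl, rfl, hv⟩,
              (ih (some (.inr (d, b, v))) (Option.some_ne_none _) τ).mpr hsat⟩
  | ex v χ ih =>
      intro u hu τ
      constructor
      · intro ⟨dd, hdd, hsat⟩
        refine ⟨C.κ u dd, hdd, ?_⟩
        have := (ih u hu (Function.update τ v dd)).mp hsat
        rwa [Function.comp_update] at this
      · intro ⟨a, ha, hsat⟩
        refine ⟨Sum.inl a, ?_, ?_⟩
        · rw [C.mem_dom_iff, C.k_inl (C.κ_Kp u)]
          exact ha
        · apply (ih u hu (Function.update τ v (Sum.inl a))).mpr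
          rw [Function.comp_update, C.k_inl (C.κ_Kp u)]
          exact hsat
  | all v χ ih =>
      intro u hu τ
      constructor
      · intro h a ha
        have h2 := h (Sum.inl a) (by
          rw [C.mem_dom_iff, C.k_inl (C.κ_Kp u)]
          exact ha)
        have := (ih u hu (Function.update τ v (Sum.inl a))).mp h2
        rwa [Function.comp_update, C.k_inl (C.κ_Kp u)] at this
      · intro h dd hdd
        apply (ih u hu (Function.update τ v dd)).mpr
        rw [Function.comp_update]
        exact h (C.κ u dd) hdd

/-- `□`-formulas at the root -/
lemma box_at_root (χ : Formula) (τ : ℕ → C.Dn)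
    (h : ∀ k, C.Kp k → C.M.sat C.w (k ∘ τ) (.box χ)) :
    C.Mn.sat none τ (.box χ) := by
  intro v' hv'
  match v' with
  | none => exact absurd hv' (by intro h; exact h)
  | some (.inl v) =>
      exact (C.deep χ (some (.inl v)) (Option.some_ne_none _) τ).mpr (h C.cMain C.Kp_cMain v hv')
  | some (.inr (d, b, v)) =>
      exact (C.deep χ (some (.inr (d, b, v))) (Option.some_ne_none _) τ).mpr
        (h (C.cCopy d b) (C.Kp_cCopy d b) v hv')

/-- `◇`-formulas at the root -/
lemma dia_at_root (χ : Formula) (τ : ℕ → C.Dn)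
    (h : C.M.sat C.w (C.cMain ∘ τ) (.dia χ)) :
    C.Mn.sat none τ (.dia χ) := by
  obtain ⟨v, hv, hsat⟩ := h
  exact ⟨some (.inl v), hv, (C.deep χ (some (.inl v)) (Option.some_ne_none _) τ).mpr hsat⟩

/-- atoms at the root -/
lemma atom_at_root (p : ℕ) (args : List ℕ) (τ : ℕ → C.Dn) :
    C.Mn.sat none τ (.atom p args) ↔ C.M.sat C.w (C.cMain ∘ τ) (.atom p args) := by
  show (args.map τ).map (C.κ none) ∈ C.M.ρ (C.βw none) p ↔ _
  rw [List.map_map]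
  exact Iff.rfl

/-- the new model is an increasing domain model -/
lemma Mn_inc : C.Mn.Increasing := by
  haveI := C.hWcnt
  haveI := C.hDcnt
  refine ⟨⟨none⟩, ⟨Sum.inl C.e0⟩, ?_, ?_, ?_, ?_, ?_⟩
  · show Countable (Option (C.M.W ⊕ (C.M.D × Bool × C.M.W))); infer_instance
  · show Countable (C.M.D ⊕ (ℕ × Bool)); infer_instance
  · intro u
    refine ⟨Sum.inl (C.hdomne (C.βw u)).choose, ?_⟩
    show C.κ u (Sum.inl (C.hdomne (C.βw u)).choose) ∈ C.M.dom (C.βw u)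
    rw [C.k_inl (C.κ_Kp u)]
    exact (C.hdomne (C.βw u)).choose_spec
  · intro u v huv dd hdd
    match u, v, huv with
    | none, some (.inl v), huv =>
        show C.cMain dd ∈ C.M.dom v
        exact C.hmono _ _ huv hdd
    | none, some (.inr (d, b, v)), huv =>
        show C.cCopy d b dd ∈ C.M.dom v
        cases dd with
        | inl a =>
            show a ∈ C.M.dom v
            have : a ∈ C.M.dom C.w := hdd
            exact C.hmono _ _ huv this
        | inr s => exact C.hmono _ _ huv (C.cCopy_inr_mem d b s)
    | some (.inl u), some (.inl v), huv =>
        show C.cMain dd ∈ C.M.dom v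
        exact C.hmono _ _ huv hdd
    | some (.inr (d, b, u)), some (.inr (d', b', v)), huv =>
        obtain ⟨hd, hb, hR⟩ := huv
        subst hd; subst hb
        show C.cCopy d b dd ∈ C.M.dom v
        exact C.hmono _ _ hR hdd
  · intro u p l hl dd hdd
    show C.κ u dd ∈ C.M.dom (C.βw u)
    exact C.hρ _ p _ hl (C.κ u dd) (List.mem_map_of_mem hdd)

end Ctx
end BW
namespace BW
namespace Ctx

open Classical

variable (C : Ctx)

lemma fsts_get_mem {i : ℕ} (hi : i < C.ys.length) : (C.ys.get ⟨i, hi⟩).1 ∈ C.fsts :=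
  List.mem_map_of_mem (f := Prod.fst) (List.get_mem _ _)

lemma snds_get_mem {i : ℕ} (hi : i < C.ys.length) : (C.ys.get ⟨i, hi⟩).2 ∈ C.snds :=
  List.mem_map_of_mem (f := Prod.snd) (List.get_mem _ _)

lemma fresh_not_bv_ψ {v : ℕ} (hv : v ∈ C.fsts ∨ v ∈ C.snds) : v ∉ C.ψ.bv := by
  intro hcon
  exact (C.fresh_not hv C.hφmem).2 (C.hbvψ hcon)

/-- the component case of the root lemma -/
lemma t_case (τ : ℕ → C.Dn)
    (hrel : ∀ v, C.cMain (τ v) ∈ C.M.dom C.w)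
    (hsat0 : C.M.sat C.w (C.cMain ∘ τ) C.tF)
    (hI : ∀ v ∈ C.tF.fv, v ≠ C.x → τ v = Sum.inl (C.σ v))
    (hII : ∀ (i : ℕ) (hi : i < C.ys.length),
      τ (C.ys.get ⟨i, hi⟩).1 = Sum.inr (i, false) ∧
      τ (C.ys.get ⟨i, hi⟩).2 = Sum.inr (i, true)) :
    C.Mn.sat none τ C.rF ∧ C.Mn.sat none τ C.tF := by
  obtain ⟨a₀, ha₀⟩ : ∃ a₀, C.cMain (τ C.x) = a₀ := ⟨_, rfl⟩
  have ha₀mem : a₀ ∈ C.M.dom C.w := ha₀ ▸ hrel C.x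
  have hsatt : C.M.sat C.w (Function.update C.σ C.x a₀) C.tF := by
    refine (sat_congr C.M ?_).mp hsat0
    intro v hv
    by_cases hvx : v = C.x
    · subst hvx
      rw [Function.update_self]
      exact ha₀
    · rw [Function.update_of_ne hvx]
      show C.cMain (τ v) = C.σ v
      rw [hI v hv hvx]
      rfl
  have hw : C.witP a₀ := (C.witP_iff a₀).mp hsatt
  obtain ⟨hRV, hψsat⟩ := C.wit_spec hw
  obtain ⟨i, hidef⟩ : ∃ i, C.pwList.idxOf (C.Tt (C.E a₀)) = i := ⟨_, rfl⟩
  have hilt : i < C.pwList.length := by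
    rw [← hidef]
    exact List.idxOf_lt_length_iff.mpr (C.Tt_mem_pwList _)
  have hi : i < C.ys.length := lt_of_lt_of_le hilt C.pwList_len_le
  have htyi : C.tyIdx i = C.Tt (C.E a₀) := by
    rw [← hidef]; exact C.tyIdx_indexOf _
  obtain ⟨hτ1, hτ2⟩ := hII i hi
  -- choose the side b of the pair of witnesses
  obtain ⟨b, hb⟩ : ∃ b : Bool, ∀ m cs, τ C.x = Sum.inr (m, cs) →
      ¬ (C.tyIdx m = C.Tt (C.E a₀) ∧ cs = b) := by
    rcases hx : τ C.x with a | ⟨m0, cs0⟩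
    · exact ⟨false, by intro m cs h; cases h⟩
    · by_cases hty : C.tyIdx m0 = C.Tt (C.E a₀)
      · refine ⟨!cs0, ?_⟩
        intro m cs h hcon
        injection h with h'
        have hm : m0 = m := congrArg Prod.fst h'
        have hcseq : cs0 = cs := congrArg Prod.snd h'
        rw [← hcseq] at hcon
        exact absurd hcon.2.symm (Bool.not_ne_self cs0)
      · refine ⟨false, ?_⟩
        intro m cs h hcon
        injection h with h'
        have hm : m0 = m := congrArg Prod.fst h'
        rw [← hm] at hcon
        exact hty hcon.1
  have F1 : C.cCopy a₀ b (Sum.inr (i, b)) = C.E a₀ := by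
    show (if C.tyIdx i = C.Tt (C.E a₀) ∧ b = b then C.E a₀
      else if C.tyIdx i = C.Tt a₀ ∧ a₀ ∈ C.M.dom C.w then a₀
      else C.aRep (C.tyIdx i)) = C.E a₀
    rw [if_pos ⟨htyi, rfl⟩]
  have F2 : C.cCopy a₀ b (τ C.x) = a₀ := by
    rcases hx : τ C.x with a | ⟨m, cs⟩
    · show a = a₀
      rw [← ha₀, hx]
      rfl
    · have hne := hb m cs hx
      have ha₀' : a₀ = C.aRep (C.tyIdx m) := by
        rw [← ha₀, hx]
        rfl
      show (if C.tyIdx m = C.Tt (C.E a₀) ∧ cs = b then C.E a₀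
        else if C.tyIdx m = C.Tt a₀ ∧ a₀ ∈ C.M.dom C.w then a₀
        else C.aRep (C.tyIdx m)) = a₀
      rw [if_neg hne]
      split
      · rfl
      · exact ha₀'.symm
  -- satisfaction of ψ at the copy world
  have hcopy : C.Mn.sat (some (.inr (a₀, b, C.V a₀)))
      (Function.update τ C.y (Sum.inr (i, b))) C.ψ := by
    apply (C.deep C.ψ (some (.inr (a₀, b, C.V a₀))) (Option.some_ne_none _) _).mpr
    refine (sat_congr C.M ?_).mpr hψsat
    intro v hv
    by_cases hvy : v = C.y
    · subst hvy
      show C.cCopy a₀ b (Function.update τ C.y (Sum.inr (i, b)) C.y) = _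
      rw [Function.update_self, Function.update_self]
      exact F1
    · show C.cCopy a₀ b (Function.update τ C.y (Sum.inr (i, b)) v) =
        Function.update (Function.update C.σ C.x a₀) C.y (C.E a₀) v
      rw [Function.update_of_ne hvy, Function.update_of_ne hvy]
      by_cases hvx : v = C.x
      · subst hvx
        rw [Function.update_self]
        exact F2
      · rw [Function.update_of_ne hvx]
        have hvt : v ∈ C.tF.fv := by
          show v ∈ (C.ψ.fv).erase C.y
          exact Finset.mem_erase.mpr ⟨hvy, hv⟩
        rw [hI v hvt hvx]
        rfl
  have hRroot : C.Rn none (some (.inr (a₀, b, C.V a₀))) := hRV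
  constructor
  · -- the replacement disjunction
    show C.Mn.sat none τ (bigOr (C.ys.map fun p =>
      Formula.or (Formula.dia (C.ψ.subst C.y p.1)) (Formula.dia (C.ψ.subst C.y p.2))))
    have hmem : (Formula.or (Formula.dia (C.ψ.subst C.y (C.ys.get ⟨i, hi⟩).1))
        (Formula.dia (C.ψ.subst C.y (C.ys.get ⟨i, hi⟩).2))) ∈
        C.ys.map fun p => Formula.or (Formula.dia (C.ψ.subst C.y p.1))
          (Formula.dia (C.ψ.subst C.y p.2)) :=
      List.mem_map.mpr ⟨C.ys.get ⟨i, hi⟩, List.get_mem _ _, rfl⟩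
    apply sat_bigOr_of_mem C.Mn none τ hmem
    cases b with
    | false =>
        have hgoal : C.Mn.sat none τ (Formula.dia (C.ψ.subst C.y (C.ys.get ⟨i, hi⟩).1)) := by
          refine ⟨some (.inr (a₀, false, C.V a₀)), hRroot, ?_⟩
          rw [sat_subst C.Mn (C.fresh_not_bv_ψ (Or.inl (C.fsts_get_mem hi))), hτ1]
          exact hcopy
        exact Or.inl hgoal
    | true =>
        have hgoal : C.Mn.sat none τ (Formula.dia (C.ψ.subst C.y (C.ys.get ⟨i, hi⟩).2)) := by
          refine ⟨some (.inr (a₀, true, C.V a₀)), hRroot, ?_⟩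
          rw [sat_subst C.Mn (C.fresh_not_bv_ψ (Or.inr (C.snds_get_mem hi))), hτ2]
          exact hcopy
        exact Or.inr hgoal
  · -- the original component still holds
    show C.Mn.sat none τ (Formula.ex C.y (Formula.dia C.ψ))
    refine ⟨Sum.inr (i, b), ?_, ?_⟩
    · rw [C.mem_dom_iff]
      exact C.aRep_mem _
    · exact ⟨some (.inr (a₀, b, C.V a₀)), hRroot, hcopy⟩

end Ctx
end BW
namespace BW
namespace Ctx

open Classical

variable (C : Ctx)

/-- the main lemma: truth at the root of the new model -/
lemma root_sat {χ : Formula} (hχ : ABBABE χ) :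
    ∀ τ : ℕ → C.Dn,
      (∀ v, C.cMain (τ v) ∈ C.M.dom C.w) →
      (∀ k, C.Kp k → C.M.sat C.w (k ∘ τ) χ) →
      (∀ δ ∈ subfs χ, ∀ k k', C.Kp k → C.Kp k' →
        (C.M.sat C.w (k ∘ τ) δ ↔ C.M.sat C.w (k' ∘ τ) δ)) →
      (∀ v ∈ C.tF.fv, v ≠ C.x → τ v = Sum.inl (C.σ v)) →
      (∀ (i : ℕ) (hi : i < C.ys.length),
        τ (C.ys.get ⟨i, hi⟩).1 = Sum.inr (i, false) ∧
        τ (C.ys.get ⟨i, hi⟩).2 = Sum.inr (i, true)) →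
      C.Mn.sat none τ (replComp C.tF C.rF χ) ∧ C.Mn.sat none τ χ := by
  induction hχ with
  | atom p args =>
      intro τ hrel hHH hHOR hI hII
      have hne : Formula.atom p args ≠ C.tF := by simp [tF]
      rw [replComp_atom hne]
      have h := (C.atom_at_root p args τ).mpr (hHH C.cMain C.Kp_cMain)
      exact ⟨h, h⟩
  | natom p args =>
      intro τ hrel hHH hHOR hI hII
      have hne : Formula.neg (Formula.atom p args) ≠ C.tF := by simp [tF]
      rw [replComp_neg hne]
      have h0 := hHH C.cMain C.Kp_cMain
      simp only [Model.sat] at h0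
      have key : C.Mn.sat none τ (Formula.neg (Formula.atom p args)) := by
        simp only [Model.sat]
        intro hcon
        exact h0 ((C.atom_at_root p args τ).mp hcon)
      exact ⟨key, key⟩
  | @and χ₁ χ₂ h₁ h₂ ih₁ ih₂ =>
      intro τ hrel hHH hHOR hI hII
      have hHH₁ : ∀ k, C.Kp k → C.M.sat C.w (k ∘ τ) χ₁ := by
        intro k hk; have := hHH k hk; simp only [Model.sat] at this; exact this.1
      have hHH₂ : ∀ k, C.Kp k → C.M.sat C.w (k ∘ τ) χ₂ := by
        intro k hk; have := hHH k hk; simp only [Model.sat] at this; exact this.2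
      obtain ⟨c₁, c₁'⟩ := ih₁ τ hrel hHH₁
        (fun δ hδ => hHOR δ (subfs_subset_and_left χ₁ χ₂ hδ)) hI hII
      obtain ⟨c₂, c₂'⟩ := ih₂ τ hrel hHH₂
        (fun δ hδ => hHOR δ (subfs_subset_and_right χ₁ χ₂ hδ)) hI hII
      have hne : Formula.and χ₁ χ₂ ≠ C.tF := by simp [tF]
      rw [replComp_and hne]
      constructor
      · simp only [Model.sat]; exact ⟨c₁, c₂⟩
      · simp only [Model.sat]; exact ⟨c₁', c₂'⟩
  | @or χ₁ χ₂ h₁ h₂ ih₁ ih₂ =>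
      intro τ hrel hHH hHOR hI hII
      have hmem₁ : χ₁ ∈ subfs (Formula.or χ₁ χ₂) :=
        subfs_subset_or_left χ₁ χ₂ (mem_subfs_self χ₁)
      have hmem₂ : χ₂ ∈ subfs (Formula.or χ₁ χ₂) :=
        subfs_subset_or_right χ₁ χ₂ (mem_subfs_self χ₂)
      have h0 := hHH C.cMain C.Kp_cMain
      simp only [Model.sat] at h0
      have hne : Formula.or χ₁ χ₂ ≠ C.tF := by simp [tF]
      rw [replComp_or hne]
      rcases h0 with h0 | h0
      · have hHH₁ : ∀ k, C.Kp k → C.M.sat C.w (k ∘ τ) χ₁ := by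
          intro k hk
          exact (hHOR χ₁ hmem₁ C.cMain k C.Kp_cMain hk).mp h0
        obtain ⟨c₁, c₁'⟩ := ih₁ τ hrel hHH₁
          (fun δ hδ => hHOR δ (subfs_subset_or_left χ₁ χ₂ hδ)) hI hII
        constructor
        · simp only [Model.sat]; exact Or.inl c₁
        · simp only [Model.sat]; exact Or.inl c₁'
      · have hHH₂ : ∀ k, C.Kp k → C.M.sat C.w (k ∘ τ) χ₂ := by
          intro k hk
          exact (hHOR χ₂ hmem₂ C.cMain k C.Kp_cMain hk).mp h0
        obtain ⟨c₂, c₂'⟩ := ih₂ τ hrel hHH₂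
          (fun δ hδ => hHOR δ (subfs_subset_or_right χ₁ χ₂ hδ)) hI hII
        constructor
        · simp only [Model.sat]; exact Or.inr c₂
        · simp only [Model.sat]; exact Or.inr c₂'
  | @box χ₁ h ih =>
      intro τ hrel hHH hHOR hI hII
      have hne : Formula.box χ₁ ≠ C.tF := by simp [tF]
      rw [replComp_box hne]
      have key := C.box_at_root χ₁ τ hHH
      exact ⟨key, key⟩
  | @dia χ₁ h ih =>
      intro τ hrel hHH hHOR hI hII
      have hne : Formula.dia χ₁ ≠ C.tF := by simp [tF]
      rw [replComp_dia hne]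
      have key := C.dia_at_root χ₁ τ (hHH C.cMain C.Kp_cMain)
      exact ⟨key, key⟩
  | @allBox v' χ₂ h ih =>
      intro τ hrel hHH hHOR hI hII
      have hneb : Formula.box χ₂ ≠ C.tF := by simp [tF]
      have hne : Formula.all v' (Formula.box χ₂) ≠ C.tF := by simp [tF]
      rw [replComp_all hne, replComp_box hneb]
      have key : C.Mn.sat none τ (Formula.all v' (Formula.box χ₂)) := by
        intro dd hdd
        apply C.box_at_root
        intro k hk
        have h1 := hHH k hk
        simp only [Model.sat] at h1
        have hdd' : C.cMain dd ∈ C.M.dom C.w := hdd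
        have h2 := h1 (k dd) (C.kdom hdd' hk)
        rw [← Function.comp_update] at h2
        intro v hv
        exact h2 v hv
      exact ⟨key, key⟩
  | @exDia v' χ₂ h ih =>
      intro τ hrel hHH hHOR hI hII
      by_cases hteq : Formula.ex v' (Formula.dia χ₂) = C.tF
      · rw [replComp_eq_of_eq hteq, hteq]
        have h0 := hHH C.cMain C.Kp_cMain
        rw [hteq] at h0
        exact C.t_case τ hrel h0 hI hII
      · have hne2 : Formula.dia χ₂ ≠ C.tF := by simp [tF]
        rw [replComp_ex hteq, replComp_dia hne2]
        have key : C.Mn.sat none τ (Formula.ex v' (Formula.dia χ₂)) := by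
          have h0 := hHH C.cMain C.Kp_cMain
          simp only [Model.sat] at h0
          obtain ⟨a, ha, v0, hv0, hsat0⟩ := h0
          refine ⟨Sum.inl a, ?_, ?_⟩
          · rw [C.mem_dom_iff]
            show C.cMain (Sum.inl a) ∈ C.M.dom C.w
            rw [C.k_inl C.Kp_cMain]
            exact ha
          · apply C.dia_at_root
            have heq : C.cMain ∘ Function.update τ v' (Sum.inl a)
                = Function.update (C.cMain ∘ τ) v' a := by
              rw [Function.comp_update]
              rfl
            rw [heq]
            exact ⟨v0, hv0, hsat0⟩
        exact ⟨key, key⟩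
  | @boxAll v' χ₂ h ih =>
      intro τ hrel hHH hHOR hI hII
      have hne : Formula.box (Formula.all v' χ₂) ≠ C.tF := by simp [tF]
      rw [replComp_box hne]
      have key := C.box_at_root (Formula.all v' χ₂) τ hHH
      exact ⟨key, key⟩
  | @diaEx v' χ₂ h ih =>
      intro τ hrel hHH hHOR hI hII
      have hne : Formula.dia (Formula.ex v' χ₂) ≠ C.tF := by simp [tF]
      rw [replComp_dia hne]
      have key := C.dia_at_root (Formula.ex v' χ₂) τ (hHH C.cMain C.Kp_cMain)
      exact ⟨key, key⟩
  | @boxEx v' χ₂ h ih =>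
      intro τ hrel hHH hHOR hI hII
      have hne : Formula.box (Formula.ex v' χ₂) ≠ C.tF := by simp [tF]
      rw [replComp_box hne]
      have key := C.box_at_root (Formula.ex v' χ₂) τ hHH
      exact ⟨key, key⟩
  | @diaAll v' χ₂ h ih =>
      intro τ hrel hHH hHOR hI hII
      have hne : Formula.dia (Formula.all v' χ₂) ≠ C.tF := by simp [tF]
      rw [replComp_dia hne]
      have key := C.dia_at_root (Formula.all v' χ₂) τ (hHH C.cMain C.Kp_cMain)
      exact ⟨key, key⟩

end Ctx
end BW
namespace BW
namespace Ctx

open Classical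

variable (C : Ctx)

lemma nonfresh_of_fvbv {γ : Formula} (hγ : γ ∈ C.Γ') {v : ℕ} (hv : v ∈ γ.fv ∪ γ.bv) :
    v ∉ C.fsts ∧ v ∉ C.snds := by
  rcases Finset.mem_union.mp hv with h | h
  · constructor <;> intro hcon
    · exact (C.fresh_not (Or.inl hcon) hγ).1 h
    · exact (C.fresh_not (Or.inr hcon) hγ).1 h
  · constructor <;> intro hcon
    · exact (C.fresh_not (Or.inl hcon) hγ).2 h
    · exact (C.fresh_not (Or.inr hcon) hγ).2 h

lemma nonfresh_of_fv {γ : Formula} (hγ : γ ∈ C.Γ') {v : ℕ} (hv : v ∈ γ.fv) :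
    v ∉ C.fsts ∧ v ∉ C.snds :=
  C.nonfresh_of_fvbv hγ (Finset.mem_union_left _ hv)

lemma k_τ₀_eq {v : ℕ} (h1 : v ∉ C.fsts) (h2 : v ∉ C.snds) {k : C.Dn → C.M.D}
    (hk : C.Kp k) : k (C.τ₀ v) = C.σ v := by
  rw [C.τ₀_nonfresh h1 h2, C.k_inl hk]

lemma HItop : ∀ v ∈ C.tF.fv, v ≠ C.x → C.τ₀ v = Sum.inl (C.σ v) := by
  intro v hv hvx
  have hvφ : v ∈ C.φ.fv := C.hfvt hv
  have hvall : v ∈ (Formula.all C.x C.φ).fv := by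
    show v ∈ C.φ.fv.erase C.x
    exact Finset.mem_erase.mpr ⟨hvx, hvφ⟩
  obtain ⟨h1, h2⟩ := C.nonfresh_of_fv C.hφmem hvall
  exact C.τ₀_nonfresh h1 h2

lemma HIupd {z : ℕ} (hz : z ∈ C.Γ'.sup Formula.bv) (dd : C.Dn) :
    ∀ v ∈ C.tF.fv, v ≠ C.x →
      Function.update C.τ₀ z dd v = Sum.inl (C.σ v) := by
  intro v hv hvx
  have hvz : v ≠ z := by
    rintro rfl
    exact hvx (C.hzx v hz hv)
  rw [Function.update_of_ne hvz]
  exact C.HItop v hv hvx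

lemma HIIupd {z : ℕ} (h1 : z ∉ C.fsts) (h2 : z ∉ C.snds) (dd : C.Dn) :
    ∀ (i : ℕ) (hi : i < C.ys.length),
      Function.update C.τ₀ z dd (C.ys.get ⟨i, hi⟩).1 = Sum.inr (i, false) ∧
      Function.update C.τ₀ z dd (C.ys.get ⟨i, hi⟩).2 = Sum.inr (i, true) := by
  intro i hi
  obtain ⟨e1, e2⟩ := C.τ₀_get i hi
  have hne1 : (C.ys.get ⟨i, hi⟩).1 ≠ z := by
    intro hcon; apply h1; rw [← hcon]; exact C.fsts_get_mem hi
  have hne2 : (C.ys.get ⟨i, hi⟩).2 ≠ z := by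
    intro hcon; apply h2; rw [← hcon]; exact C.snds_get_mem hi
  rw [Function.update_of_ne hne1, Function.update_of_ne hne2]
  exact ⟨e1, e2⟩

lemma hrel_upd {z : ℕ} {dd : C.Dn} (hdd : C.cMain dd ∈ C.M.dom C.w) :
    ∀ v, C.cMain (Function.update C.τ₀ z dd v) ∈ C.M.dom C.w := by
  intro v
  by_cases hvz : v = z
  · subst hvz; rw [Function.update_self]; exact hdd
  · rw [Function.update_of_ne hvz]; exact C.τ₀_rel v

lemma k_upd_congr {z : ℕ} (dd : C.Dn) {k : C.Dn → C.M.D} (hk : C.Kp k) {δ : Formula}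
    (hfv : ∀ v ∈ δ.fv, v ≠ z → (v ∉ C.fsts ∧ v ∉ C.snds)) :
    C.M.sat C.w (k ∘ Function.update C.τ₀ z dd) δ ↔
      C.M.sat C.w (Function.update C.σ z (k dd)) δ := by
  apply sat_congr
  intro v hv
  by_cases hvz : v = z
  · subst hvz
    show k (Function.update C.τ₀ v dd v) = Function.update C.σ v (k dd) v
    rw [Function.update_self, Function.update_self]
  · obtain ⟨h1, h2⟩ := hfv v hv hvz
    show k (Function.update C.τ₀ z dd v) = Function.update C.σ z (k dd) v
    rw [Function.update_of_ne hvz, Function.update_of_ne hvz]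
    exact C.k_τ₀_eq h1 h2 hk

lemma fv_cond_of_subfs {z : ℕ} {χ γ : Formula} (hγ : γ ∈ C.Γ')
    (hγeq : γ = Formula.all z χ ∨ γ = Formula.ex z χ)
    {δ : Formula} (hδ : δ ∈ subfs χ) :
    ∀ v ∈ δ.fv, v ≠ z → (v ∉ C.fsts ∧ v ∉ C.snds) := by
  intro v hv hvz
  have h1 := (subfs_fv_bv hδ).1 hv
  have hmem : v ∈ γ.fv ∪ γ.bv := by
    rcases hγeq with rfl | rfl
    · rcases Finset.mem_union.mp h1 with h | h
      · refine Finset.mem_union_left _ ?_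
        show v ∈ χ.fv.erase z
        exact Finset.mem_erase.mpr ⟨hvz, h⟩
      · refine Finset.mem_union_right _ ?_
        show v ∈ insert z χ.bv
        exact Finset.mem_insert_of_mem h
    · rcases Finset.mem_union.mp h1 with h | h
      · refine Finset.mem_union_left _ ?_
        show v ∈ χ.fv.erase z
        exact Finset.mem_erase.mpr ⟨hvz, h⟩
      · refine Finset.mem_union_right _ ?_
        show v ∈ insert z χ.bv
        exact Finset.mem_insert_of_mem h
  exact C.nonfresh_of_fvbv hγ hmem

/-- the hypotheses of `root_sat` established for the body of a universally
quantified member of `Γ'` -/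
lemma HH_upd {z : ℕ} {χ : Formula} (hγ : Formula.all z χ ∈ C.Γ') {dd : C.Dn}
    (hdd : C.cMain dd ∈ C.M.dom C.w) :
    ∀ k, C.Kp k → C.M.sat C.w (k ∘ Function.update C.τ₀ z dd) χ := by
  intro k hk
  have hs := C.hsat _ hγ
  simp only [Model.sat] at hs
  exact (C.k_upd_congr dd hk (C.fv_cond_of_subfs hγ (Or.inl rfl) (mem_subfs_self χ))).mpr
    (hs (k dd) (C.kdom hdd hk))

lemma HOR_upd {z : ℕ} {χ : Formula} (hγ : Formula.all z χ ∈ C.Γ') (dd : C.Dn) :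
    ∀ δ ∈ subfs χ, ∀ k k', C.Kp k → C.Kp k' →
      (C.M.sat C.w (k ∘ Function.update C.τ₀ z dd) δ ↔
        C.M.sat C.w (k' ∘ Function.update C.τ₀ z dd) δ) := by
  intro δ hδ k k' hk hk'
  have hcond := C.fv_cond_of_subfs hγ (Or.inl rfl) hδ
  rw [C.k_upd_congr dd hk hcond, C.k_upd_congr dd hk' hcond]
  cases dd with
  | inl a => rw [C.k_inl hk, C.k_inl hk']
  | inr s =>
      obtain ⟨n, c⟩ := s
      by_cases hreal : C.realized (C.tyIdx n)
      · have hPmem : (z, δ) ∈ C.Pset := C.mem_Pset_of_all hγ hδ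
        have e2 : ∀ k0 : C.Dn → C.M.D, C.Kp k0 →
            (C.M.sat C.w (Function.update C.σ z (k0 (Sum.inr (n, c)))) δ ↔
              (z, δ) ∈ C.Tt (k0 (Sum.inr (n, c)))) := by
          intro k0 _
          rw [C.mem_Tt]
          simp only [hPmem, true_and]
        rw [e2 k hk, e2 k' hk', C.tcoll_real hreal hk, C.tcoll_real hreal hk']
      · rw [C.tcoll_unreal hreal hk, C.tcoll_unreal hreal hk']

/-- every member of `Γ'` holds at the root under `τ₀` -/
lemma gamma_at_root {γ : Formula} (hγ : γ ∈ C.Γ')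
    (hcls : ABBABE γ ∨ (∃ z χ, γ = Formula.all z χ ∧ ABBABE χ) ∨
      (∃ z χ, γ = Formula.ex z χ ∧ ABBABE χ)) :
    C.Mn.sat none C.τ₀ γ := by
  rcases hcls with hA | ⟨z, χ, rfl, hA⟩ | ⟨z, χ, rfl, hA⟩
  · refine (C.root_sat hA C.τ₀ C.τ₀_rel ?_ ?_ C.HItop C.τ₀_get).2
    · intro k hk
      refine (sat_congr C.M ?_).mp (C.hsat γ hγ)
      intro v hv
      obtain ⟨h1, h2⟩ := C.nonfresh_of_fv hγ hv
      exact (C.k_τ₀_eq h1 h2 hk).symm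
    · intro δ hδ k k' hk hk'
      apply sat_congr
      intro v hv
      have hvv : v ∈ γ.fv ∪ γ.bv := (subfs_fv_bv hδ).1 hv
      obtain ⟨h1, h2⟩ := C.nonfresh_of_fvbv hγ hvv
      show k (C.τ₀ v) = k' (C.τ₀ v)
      rw [C.k_τ₀_eq h1 h2 hk, C.k_τ₀_eq h1 h2 hk']
  · -- γ = all z χ
    have hzbv : z ∈ C.Γ'.sup Formula.bv :=
      (Finset.le_sup (f := Formula.bv) hγ) (show z ∈ (Formula.all z χ).bv from Finset.mem_insert_self _ _)
    obtain ⟨hz1, hz2⟩ := C.nonfresh_of_fvbv hγ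
      (Finset.mem_union_right _ (show z ∈ (Formula.all z χ).bv from Finset.mem_insert_self _ _))
    intro dd hdd
    have hdd' : C.cMain dd ∈ C.M.dom C.w := hdd
    exact (C.root_sat hA _ (C.hrel_upd hdd') (C.HH_upd hγ hdd') (C.HOR_upd hγ dd)
      (C.HIupd hzbv dd) (C.HIIupd hz1 hz2 dd)).2
  · -- γ = ex z χ
    have hzbv : z ∈ C.Γ'.sup Formula.bv :=
      (Finset.le_sup (f := Formula.bv) hγ) (show z ∈ (Formula.ex z χ).bv from Finset.mem_insert_self _ _)
    obtain ⟨hz1, hz2⟩ := C.nonfresh_of_fvbv hγ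
      (Finset.mem_union_right _ (show z ∈ (Formula.ex z χ).bv from Finset.mem_insert_self _ _))
    have hs := C.hsat _ hγ
    simp only [Model.sat] at hs
    obtain ⟨a, ha, hsx⟩ := hs
    have hdd' : C.cMain (Sum.inl a : C.Dn) ∈ C.M.dom C.w := by
      rw [C.k_inl C.Kp_cMain]; exact ha
    refine ⟨Sum.inl a, ?_, ?_⟩
    · rw [C.mem_dom_iff]
      exact hdd'
    · refine (C.root_sat hA _ (C.hrel_upd hdd') ?_ ?_
        (C.HIupd hzbv _) (C.HIIupd hz1 hz2 _)).2
      · intro k hk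
        refine (C.k_upd_congr _ hk
          (C.fv_cond_of_subfs hγ (Or.inr rfl) (mem_subfs_self χ))).mpr ?_
        rw [C.k_inl hk]
        exact hsx
      · intro δ hδ k k' hk hk'
        have hcond := C.fv_cond_of_subfs hγ (Or.inr rfl) hδ
        rw [C.k_upd_congr _ hk hcond, C.k_upd_congr _ hk' hcond,
          C.k_inl hk, C.k_inl hk']

/-- the new bounded-witness formula holds at the root -/
lemma main_at_root :
    C.Mn.sat none C.τ₀ (Formula.all C.x (replComp C.tF C.rF C.φ)) := by
  have hγ := C.hφmem
  have hzbv : C.x ∈ C.Γ'.sup Formula.bv :=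
    (Finset.le_sup (f := Formula.bv) hγ) (show C.x ∈ (Formula.all C.x C.φ).bv from Finset.mem_insert_self _ _)
  obtain ⟨hz1, hz2⟩ := C.nonfresh_of_fvbv hγ
    (Finset.mem_union_right _
      (show C.x ∈ (Formula.all C.x C.φ).bv from Finset.mem_insert_self _ _))
  intro dd hdd
  have hdd' : C.cMain dd ∈ C.M.dom C.w := hdd
  exact (C.root_sat C.hABB _ (C.hrel_upd hdd') (C.HH_upd hγ hdd') (C.HOR_upd hγ dd)
    (C.HIupd hzbv dd) (C.HIIupd hz1 hz2 dd)).1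

end Ctx
end BW
/-- corollary of the bounded-witness lemma, with
`l = 2^{|Γ'|}` exactly.  Let `Γ' = Γ ∪ {∀x φ}` be a clean finite set of
formulas, each a subformula of the `ABBABE` fragment, where `∃y◇ψ` is a
component of `φ`.  If `⋀Γ ∧ ∀x φ[∃y◇ψ]` is satisfiable in an increasing domain
model, then for `l = 2^{|Γ'|}` exactly, the formula
`⋀Γ ∧ ∃y1∃y1'…∃yl∃yl' ∀x φ[ȳ◇ψ]` is satisfiable in an increasing domain model,
with `y1,y1',…,yl,yl'` fresh variables and `φ[ȳ◇ψ]` obtained from `φ` by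
replacing the component `∃y◇ψ` with `⋁_{i≤l}(◇ψ[yi/y] ∨ ◇ψ[yi'/y])`. -/
theorem bounded_witnesses_exact (Γ : Finset Formula) (x y : ℕ) (φ ψ : Formula)
    (hclean : CleanSet (insert (Formula.all x φ) Γ))
    (hsub : ∀ γ ∈ insert (Formula.all x φ) Γ, IsSubABBABE γ)
    (hcomp : Formula.ex y (.dia ψ) ∈ φ.comps)
    (hsat : SatSet (insert (Formula.all x φ) Γ)) :
    ∀ ys : List (ℕ × ℕ),
      ys.length = 2 ^ ((insert (Formula.all x φ) Γ).sum Formula.size) →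
      (ys.map Prod.fst ++ ys.map Prod.snd).Nodup →
      (∀ v ∈ ys.map Prod.fst ++ ys.map Prod.snd,
        ∀ γ ∈ insert (Formula.all x φ) Γ, v ∉ γ.fv ∪ γ.bv) →
      SatSet (insert
        (exChain ys (Formula.all x (replComp (.ex y (.dia ψ)) (mkWitDisj y ψ ys) φ)))
        Γ) := by
  intro ys hlen hnodup hfresh
  classical
  obtain ⟨M, hMinc, w, σ, hrel, hsatΓ⟩ := hsat
  obtain ⟨hWne, hDne, hWcnt, hDcnt, hdomne, hmono, hρ⟩ := hMinc
  have hφmem : Formula.all x φ ∈ insert (Formula.all x φ) Γ := Finset.mem_insert_self _ _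
  -- φ is in the fragment
  have hABB : ABBABE φ := by
    obtain ⟨θ, hθ, hsf⟩ := hsub _ hφmem
    rcases BW.subclass hθ hsf with hA | ⟨z, χ, heq, hχ⟩ | ⟨z, χ, heq, hχ⟩
    · exfalso
      cases hA with
      | allBox h =>
          rw [BW.comps_box] at hcomp
          simp at hcomp
    · injection heq with h1 h2
      rw [h2]
      exact hχ
    · exact absurd heq (by simp)
  have htsub : Formula.ex y (.dia ψ) ∈ BW.subfs φ := BW.comps_subset_subfs φ hcomp
  have hbvt : (Formula.ex y (.dia ψ)).bv ⊆ φ.bv := (BW.subfs_fv_bv htsub).2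
  have hfvt : (Formula.ex y (.dia ψ)).fv ⊆ φ.fv := BW.compfv hABB hcomp
  have hzx : ∀ v ∈ (insert (Formula.all x φ) Γ).sup Formula.bv,
      v ∈ (Formula.ex y (.dia ψ)).fv → v = x := by
    intro v hv hvt
    by_contra hvx
    have h1 : v ∈ φ.fv := hfvt hvt
    have h2 : v ∈ (Formula.all x φ).fv := by
      show v ∈ φ.fv.erase x
      exact Finset.mem_erase.mpr ⟨hvx, h1⟩
    have h3 : v ∈ (insert (Formula.all x φ) Γ).sup Formula.fv :=
      (Finset.le_sup (f := Formula.fv) hφmem) h2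
    exact (Finset.disjoint_left.mp hclean.2.1 h3) hv
  have hxy : x ≠ y := by
    have hyφ : y ∈ φ.bv := hbvt (by
      show y ∈ insert y (Formula.dia ψ).bv
      exact Finset.mem_insert_self _ _)
    have hub := hclean.1 _ hφmem
    have hxφ : x ∉ φ.bv := hub.2
    intro h
    rw [h] at hxφ
    exact hxφ hyφ
  have hbvψ : ψ.bv ⊆ (Formula.all x φ).bv := by
    intro v hv
    have h1 : v ∈ (Formula.ex y (.dia ψ)).bv := by
      show v ∈ insert y (Formula.dia ψ).bv
      exact Finset.mem_insert_of_mem hv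
    have h2 := hbvt h1
    show v ∈ insert x φ.bv
    exact Finset.mem_insert_of_mem h2
  let C : BW.Ctx := {
    M := M, w := w, σ := σ, x := x, y := y, φ := φ, ψ := ψ,
    Γ' := insert (Formula.all x φ) Γ, ys := ys,
    hsat := hsatΓ, hrelσ := hrel,
    hWne := hWne, hDne := hDne, hWcnt := hWcnt, hDcnt := hDcnt,
    hdomne := hdomne, hmono := hmono, hρ := hρ,
    hφmem := hφmem, hABB := hABB, hfresh := hfresh, hnodup := hnodup, hlen := hlen,
    hzx := hzx, hxy := hxy, hbvψ := hbvψ, hfvt := hfvt }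
  refine ⟨C.Mn, C.Mn_inc, none, C.τ₀, ?_, ?_⟩
  · intro v
    exact C.τ₀_rel v
  · intro γ hγ
    rcases Finset.mem_insert.mp hγ with rfl | hγΓ
    · -- the new bounded-witness formula
      apply BW.sat_exChain C.Mn none C.τ₀ _ ys C.τ₀
      · intro p hp
        constructor
        · exact C.τ₀_rel p.1
        · exact C.τ₀_rel p.2
      · have heq : (ys.foldl (fun (t : ℕ → C.Mn.D) (p : ℕ × ℕ) =>
            Function.update (Function.update t p.1 (C.τ₀ p.1)) p.2 (C.τ₀ p.2)) C.τ₀) = C.τ₀ := by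
          funext v
          by_cases hv : v ∈ ys.map Prod.fst ∨ v ∈ ys.map Prod.snd
          · exact BW.foldl_upd_mem C.Mn C.τ₀ _ hv
          · push_neg at hv
            exact BW.foldl_upd_not_mem C.Mn C.τ₀ _ hv.1 hv.2
        rw [heq]
        exact C.main_at_root
    · have hγ' : γ ∈ insert (Formula.all x φ) Γ := Finset.mem_insert_of_mem hγΓ
      have hcls : ABBABE γ ∨ (∃ z χ, γ = Formula.all z χ ∧ ABBABE χ) ∨
          (∃ z χ, γ = Formula.ex z χ ∧ ABBABE χ) := by
        obtain ⟨θ, hθ, hsf⟩ := hsub γ hγ'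
        exact BW.subclass hθ hsf
      exact C.gamma_at_root hγ' hcls
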